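/- arXiv:2404.04380 — 3 statements merged into one kernel-verified Lean document; each statement's English description precedes it below -/
import Mathlib

section
/- Let G be a finite connected simple graph with at least one edge. The edge ideal I(G) is Lyubeznik — i.e., there exists a total order ≻ on mingens(I(G)) such that no Lyubeznik-critical subset has a bridge (equivalently, the associated Lyubeznik resolution is minimal) — if and only if G is isomorphic to L(a,b,c) for some nonnegative integers a, b, c. -/
open scoped Classical

noncomputable section

namespace ChauHaMaithani

variable {V : Type*}

/-- The lcm of a finite set of monomials (exponent vectors): pointwise maximum. -/
def mlcm (σ : Finset (V → ℕ)) : V → ℕ := fun v => σ.sup fun g => g v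

/-- `m` is a bridge of `σ`: `m ∈ σ` and dropping `m` does not change the lcm. -/
def IsBridge (σ : Finset (V → ℕ)) (m : V → ℕ) : Prop :=
  m ∈ σ ∧ mlcm (σ.erase m) = mlcm σ

/-- `m` is a gap of `σ`: `m ∉ σ` and adding `m` does not change the lcm. -/
def IsGap (σ : Finset (V → ℕ)) (m : V → ℕ) : Prop :=
  m ∉ σ ∧ mlcm (insert m σ) = mlcm σ

/-- A total order `≻` on monomials is encoded by a ranking function `ord`:
`m ≻ m'` iff `ord m' < ord m` (injectivity on the generating set is assumed separately).
`m` is a true gap of `σ` if it is a gap and every bridge of `σ ∪ {m}` dominated by `m`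
is already a bridge of `σ`. -/
def IsTrueGap (ord : (V → ℕ) → ℕ) (σ : Finset (V → ℕ)) (m : V → ℕ) : Prop :=
  IsGap σ m ∧ ∀ m', IsBridge (insert m σ) m' → ord m' < ord m → IsBridge σ m'

/-- `σ` is type-1: it has a true gap (in `M`) dominating none of its bridges. -/
def Type1 (M : Finset (V → ℕ)) (ord : (V → ℕ) → ℕ) (σ : Finset (V → ℕ)) : Prop :=
  ∃ m ∈ M, IsTrueGap ord σ m ∧ ∀ b, IsBridge σ b → ¬ ord b < ord m

/-- `σ` is potentially-type-2: it has a bridge dominating none of its true gaps. -/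
def PotType2 (M : Finset (V → ℕ)) (ord : (V → ℕ) → ℕ) (σ : Finset (V → ℕ)) : Prop :=
  ∃ b, IsBridge σ b ∧ ∀ m ∈ M, IsTrueGap ord σ m → ¬ ord m < ord b

/-- `b` is the `≻`-smallest bridge of `σ`. -/
def IsSBridge (ord : (V → ℕ) → ℕ) (σ : Finset (V → ℕ)) (b : V → ℕ) : Prop :=
  IsBridge σ b ∧ ∀ b', IsBridge σ b' → ord b ≤ ord b'

/-- `σ` is type-2. -/
def Type2 (M : Finset (V → ℕ)) (ord : (V → ℕ) → ℕ) (σ : Finset (V → ℕ)) : Prop :=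
  PotType2 M ord σ ∧
    ∀ σ' : Finset (V → ℕ), σ' ⊆ M → σ' ≠ σ → PotType2 M ord σ' →
      ∀ b b', IsSBridge ord σ b → IsSBridge ord σ' b' →
        σ'.erase b' = σ.erase b → ord b < ord b'

/-- `M` (the minimal generating set of a monomial ideal) is bridge-friendly w.r.t. `ord`:
every potentially-type-2 subset is type-2. -/
def BridgeFriendlyWrt (M : Finset (V → ℕ)) (ord : (V → ℕ) → ℕ) : Prop :=
  ∀ σ ⊆ M, PotType2 M ord σ → Type2 M ord σ

/-- `M` is bridge-friendly: bridge-friendly w.r.t. some total order on `M`. -/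
def BridgeFriendly (M : Finset (V → ℕ)) : Prop :=
  ∃ ord : (V → ℕ) → ℕ, Set.InjOn ord M ∧ BridgeFriendlyWrt M ord

/-- `σ = {m_1 ≻ ⋯ ≻ m_k} ⊆ M` is Lyubeznik-critical w.r.t. `ord`: there is no `m ∈ M` with
`m_t ≻ m` and `m ∣ lcm(m_1, …, m_t)` for some `1 < t ≤ k`. -/
def LyubCritical (M : Finset (V → ℕ)) (ord : (V → ℕ) → ℕ) (σ : Finset (V → ℕ)) : Prop :=
  σ ⊆ M ∧ ¬ ∃ m ∈ M, ∃ t ∈ σ, (∃ u ∈ σ, ord t < ord u) ∧ ord m < ord t ∧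
      ∀ v, m v ≤ mlcm (σ.filter fun g => ord t ≤ ord g) v

/-- `M` is Lyubeznik: for some total order on `M`, no Lyubeznik-critical subset has a
bridge (equivalently, the associated Lyubeznik resolution is minimal). -/
def IsLyubeznik (M : Finset (V → ℕ)) : Prop :=
  ∃ ord : (V → ℕ) → ℕ, Set.InjOn ord M ∧
    ∀ σ : Finset (V → ℕ), LyubCritical M ord σ → ∀ b, ¬ IsBridge σ b

/-- The quadratic monomial `xy` attached to an edge `e = {x,y}`. -/
def edgeMon (e : Sym2 V) : V → ℕ := fun v => if v ∈ e then 1 else 0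

/-- `mingens(I(G))`: the edge monomials of `G`. -/
def edgeGens [Fintype V] (G : SimpleGraph V) : Finset (V → ℕ) :=
  (Finset.univ.filter fun e : Sym2 V => e ∈ G.edgeSet).image edgeMon

/-- `mingens(I(G)^n)`: the monomials that are products of `n` edges of `G`. -/
def edgePowGens [Fintype V] (G : SimpleGraph V) (n : ℕ) : Finset (V → ℕ) :=
  (Finset.univ.filter fun f : Fin n → Sym2 V => ∀ i, f i ∈ G.edgeSet).image
    fun f => ∑ i, edgeMon (f i)

/-- A graph is chordal if it contains no induced cycle of length at least 4. -/
def Chordal (G : SimpleGraph V) : Prop :=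
  ∀ n, 4 ≤ n → IsEmpty (SimpleGraph.cycleGraph n ↪g G)


/-- Vertex type of the graph `L(a,b,c)`: `Sum.inl 0` is `x`, `Sum.inl 1` is `y`,
and the remaining summands are the leaves `x_i`, the leaves `y_j`, and the
triangle tips `z_k`. -/
abbrev LV (a b c : ℕ) := Fin 2 ⊕ (Fin a ⊕ Fin b ⊕ Fin c)

/-- The graph `L(a,b,c)`: `c` triangles glued along the common edge `{x,y}`, with
`a` leaves attached to `x` and `b` leaves attached to `y`. -/
def LGraph (a b c : ℕ) : SimpleGraph (LV a b c) :=
  SimpleGraph.fromRel fun u v =>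
    (u = Sum.inl 0 ∧ v = Sum.inl 1) ∨
    (∃ i, u = Sum.inl 0 ∧ v = Sum.inr (Sum.inl i)) ∨
    (∃ j, u = Sum.inl 1 ∧ v = Sum.inr (Sum.inr (Sum.inl j))) ∨
    (∃ k, (u = Sum.inl 0 ∨ u = Sum.inl 1) ∧ v = Sum.inr (Sum.inr (Sum.inr k)))

/-- The graph `BF(T,w)`: attach `w(e)` new triangles along each edge `e` of `T`. -/
def BFGraph {VT : Type} (T : SimpleGraph VT) (w : T.edgeSet → ℕ) :
    SimpleGraph (VT ⊕ (Σ e : T.edgeSet, Fin (w e))) :=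
  SimpleGraph.fromRel fun u v =>
    (∃ a b, u = Sum.inl a ∧ v = Sum.inl b ∧ T.Adj a b) ∨
    (∃ (a : VT) (e : T.edgeSet) (i : Fin (w e)), u = Sum.inl a ∧ v = Sum.inr ⟨e, i⟩ ∧
      a ∈ (e : Sym2 VT))

/-- The kite graph: the diamond (`K₄` minus the edge `{2,3}`) together with a pendant
vertex `4` attached to the degree-two vertex `2`. -/
def kite : SimpleGraph (Fin 5) :=
  SimpleGraph.fromEdgeSet {s(0,1), s(0,2), s(0,3), s(1,2), s(1,3), s(2,4)}

/-- The gem graph: the path `0-1-2-3` together with a vertex `4` adjacent to all of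
`0,1,2,3`. -/
def gem : SimpleGraph (Fin 5) :=
  SimpleGraph.fromEdgeSet {s(0,1), s(1,2), s(2,3), s(0,4), s(1,4), s(2,4), s(3,4)}

/-- The tadpole graph: the triangle `0,1,2` with a path `0-3-4` of length 2 attached. -/
def tadpole : SimpleGraph (Fin 5) :=
  SimpleGraph.fromEdgeSet {s(0,1), s(1,2), s(0,2), s(0,3), s(3,4)}

/-- The butterfly graph: two triangles `0,1,2` and `0,3,4` sharing the vertex `0`. -/
def butterfly : SimpleGraph (Fin 5) :=
  SimpleGraph.fromEdgeSet {s(0,1), s(1,2), s(0,2), s(0,3), s(3,4), s(0,4)}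

/-- The net graph: the triangle `0,1,2` with pendant vertices `3,4,5` attached to
`0,1,2` respectively. -/
def net : SimpleGraph (Fin 6) :=
  SimpleGraph.fromEdgeSet {s(0,1), s(1,2), s(0,2), s(0,3), s(1,4), s(2,5)}



/-! ### Auxiliary lemmas -/

section Aux
set_option linter.unusedSectionVars false

variable {V : Type}

/-- An edge with a common endpoint pair: every edge of the graph meets `{x,y}`. -/
def Dom (G : SimpleGraph V) (x y : V) : Prop :=
  G.Adj x y ∧ ∀ u v, G.Adj u v → u = x ∨ u = y ∨ v = x ∨ v = y

lemma edgeMon_apply_mem {e : Sym2 V} {v : V} (h : v ∈ e) : edgeMon e v = 1 := by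
  simp [edgeMon, h]

lemma edgeMon_pos_iff {e : Sym2 V} {v : V} : 0 < edgeMon e v ↔ v ∈ e := by
  simp only [edgeMon]; split <;> simp_all

lemma edgeMon_inj {e e' : Sym2 V} (h : edgeMon e = edgeMon e') : e = e' := by
  apply Sym2.ext
  intro v
  have hv := congrFun h v
  simp only [edgeMon] at hv
  constructor <;> intro hm
  · by_contra hc; simp [hm, hc] at hv
  · by_contra hc; simp [hm, hc] at hv

lemma mem_edgeGens [Fintype V] {G : SimpleGraph V} {m : V → ℕ} :
    m ∈ edgeGens G ↔ ∃ u v, G.Adj u v ∧ m = edgeMon s(u,v) := by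
  unfold edgeGens
  simp only [Finset.mem_image, Finset.mem_filter, Finset.mem_univ, true_and]
  constructor
  · rintro ⟨e, he, rfl⟩
    induction e using Sym2.ind with
    | _ u v => exact ⟨u, v, G.mem_edgeSet.mp he, rfl⟩
  · rintro ⟨u, v, h, rfl⟩
    exact ⟨s(u,v), G.mem_edgeSet.mpr h, rfl⟩

lemma edgeMon_mem [Fintype V] {G : SimpleGraph V} {u v : V} (h : G.Adj u v) : edgeMon s(u,v) ∈ edgeGens G :=
  mem_edgeGens.mpr ⟨u, v, h, rfl⟩

lemma le_mlcm {σ : Finset (V → ℕ)} {m : V → ℕ} (h : m ∈ σ) (v : V) : m v ≤ mlcm σ v := by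
  simp only [mlcm]
  exact Finset.le_sup (f := fun g : V → ℕ => g v) h

lemma mlcm_pos {σ : Finset (V → ℕ)} {v : V} (h : 0 < mlcm σ v) : ∃ g ∈ σ, 0 < g v := by
  by_contra hc
  push_neg at hc
  have h0 : mlcm σ v ≤ 0 := by
    simp only [mlcm]
    exact Finset.sup_le fun g hg => Nat.le_of_not_lt (by simpa using hc g hg)
  omega

lemma sym2_eq_of_mem {e : Sym2 V} {x y : V} (hx : x ∈ e) (hy : y ∈ e) (hxy : x ≠ y) :
    e = s(x,y) := by
  induction e using Sym2.ind with
  | _ a c =>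
    rw [Sym2.mem_iff] at hx hy
    obtain rfl | rfl := hx <;> obtain rfl | rfl := hy
    · exact absurd rfl hxy
    · rfl
    · exact Sym2.eq_swap
    · exact absurd rfl hxy

lemma sym2_eq_of_subset {e : Sym2 V} (hd : ¬ e.IsDiag) {x y : V}
    (h : ∀ v ∈ e, v = x ∨ v = y) : e = s(x,y) := by
  induction e using Sym2.ind with
  | _ a c =>
    have hac : a ≠ c := by simpa using hd
    obtain rfl | rfl := h a (by simp) <;> obtain rfl | rfl := h c (by simp)
    · exact absurd rfl hac
    · rfl
    · exact Sym2.eq_swap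
    · exact absurd rfl hac

lemma isBridge_of_le {σ : Finset (V → ℕ)} {m : V → ℕ} (hm : m ∈ σ)
    (h : ∀ v, ∃ g ∈ σ, g ≠ m ∧ m v ≤ g v) : IsBridge σ m := by
  refine ⟨hm, funext fun v => le_antisymm ?_ ?_⟩
  · simp only [mlcm]
    refine Finset.sup_mono fun g hg => ?_
    exact Finset.mem_of_mem_erase hg
  · simp only [mlcm]
    refine Finset.sup_le fun g hg => ?_
    by_cases hgm : g = m
    · subst hgm
      obtain ⟨g', hg', hne, hle⟩ := h v
      refine le_trans hle (Finset.le_sup (f := fun g : V → ℕ => g v) ?_)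
      exact Finset.mem_erase_of_ne_of_mem hne hg'
    · refine Finset.le_sup (f := fun g : V → ℕ => g v) ?_
      exact Finset.mem_erase_of_ne_of_mem hgm hg

lemma bridge_cover {σ : Finset (V → ℕ)} {b : V → ℕ} (hb : IsBridge σ b) {u : V}
    (hu : 0 < b u) : ∃ m' ∈ σ, m' ≠ b ∧ 0 < m' u := by
  have h2 : b u ≤ mlcm σ u := le_mlcm hb.1 u
  have h3 := congrFun hb.2 u
  have h1 : 0 < mlcm (σ.erase b) u := by rw [h3]; omega
  obtain ⟨g, hg, hgu⟩ := mlcm_pos h1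
  exact ⟨g, Finset.mem_of_mem_erase hg, Finset.ne_of_mem_erase hg, hgu⟩


lemma lgraph_adj_cases {a b c : ℕ} {u v : LV a b c} (h : (LGraph a b c).Adj u v) :
    u = Sum.inl 0 ∨ u = Sum.inl 1 ∨ v = Sum.inl 0 ∨ v = Sum.inl 1 := by
  rw [LGraph, SimpleGraph.fromRel_adj] at h
  obtain ⟨-, h | h⟩ := h <;>
    rcases h with ⟨h1, h2⟩ | ⟨i, h1, h2⟩ | ⟨j, h1, h2⟩ | ⟨k, h1, h2⟩ <;> tauto

lemma lgraph_adj_top {a b c : ℕ} : (LGraph a b c).Adj (Sum.inl 0) (Sum.inl 1) := by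
  rw [LGraph, SimpleGraph.fromRel_adj]
  exact ⟨by simp, Or.inl (Or.inl ⟨rfl, rfl⟩)⟩

lemma iso_dom {G : SimpleGraph V} {a b c : ℕ} (φ : G ≃g LGraph a b c) :
    ∃ x y, Dom G x y := by
  refine ⟨φ.symm (Sum.inl 0), φ.symm (Sum.inl 1), φ.symm.map_adj_iff.mpr lgraph_adj_top, ?_⟩
  intro u v h
  have h2 : (LGraph a b c).Adj (φ u) (φ v) := φ.map_adj_iff.mpr h
  rcases lgraph_adj_cases h2 with h3 | h3 | h3 | h3
  · exact Or.inl (by rw [← h3]; exact (φ.symm_apply_apply u).symm)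
  · exact Or.inr (Or.inl (by rw [← h3]; exact (φ.symm_apply_apply u).symm))
  · exact Or.inr (Or.inr (Or.inl (by rw [← h3]; exact (φ.symm_apply_apply v).symm)))
  · exact Or.inr (Or.inr (Or.inr (by rw [← h3]; exact (φ.symm_apply_apply v).symm)))

/-- If some vertex outside `{x,y}` has a neighbor outside `{x,y}`, and is connected to
`x`, then there is an edge `z-w` entirely outside `{x,y}` with `z` adjacent to `x` or `y`. -/
lemma walk_structure {G : SimpleGraph V} {x y : V} :
    ∀ {u : V} (_W : G.Walk u x), u ≠ x → u ≠ y →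
      ∀ w', G.Adj u w' → w' ≠ x → w' ≠ y →
      ∃ z w, G.Adj z w ∧ (G.Adj x z ∨ G.Adj y z) ∧ z ≠ x ∧ z ≠ y ∧ w ≠ x ∧ w ≠ y := by
  intro u W
  induction W with
  | nil => intro h; exact absurd rfl h
  | @cons u a x' h W ih =>
    intro hux huy w' hw hwx hwy
    by_cases hax : a = x'
    · exact ⟨u, w', hw, Or.inl (hax ▸ h).symm, hux, huy, hwx, hwy⟩
    by_cases hay : a = y
    · exact ⟨u, w', hw, Or.inr (hay ▸ h).symm, hux, huy, hwx, hwy⟩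
    · exact ih hax hay u h.symm hux huy


lemma crit_contra [Fintype V] {G : SimpleGraph V} {x y : V} (hxy : G.Adj x y)
    {ord : (V → ℕ) → ℕ}
    (hinj : Set.InjOn ord (edgeGens G))
    (hmin : ∀ n ∈ edgeGens G, n ≠ edgeMon s(x,y) → ord (edgeMon s(x,y)) < ord n)
    {σ : Finset (V → ℕ)} (hσ : σ ⊆ edgeGens G)
    {s₁ s₂ : V → ℕ} (h1 : s₁ ∈ σ) (h2 : s₂ ∈ σ) (hne : s₁ ≠ s₂)
    (h1P : s₁ ≠ edgeMon s(x,y)) (h2P : s₂ ≠ edgeMon s(x,y))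
    (hx : 0 < s₁ x) (hy : 0 < s₂ y) :
    ∃ m ∈ edgeGens G, ∃ t ∈ σ, (∃ u ∈ σ, ord t < ord u) ∧ ord m < ord t ∧
      ∀ v, m v ≤ mlcm (σ.filter fun g => ord t ≤ ord g) v := by
  have hord : ord s₁ ≠ ord s₂ := fun h => hne (hinj (hσ h1) (hσ h2) h)
  have hPM : edgeMon s(x,y) ∈ edgeGens G := edgeMon_mem hxy
  have key : ∀ t : V → ℕ, t ∈ σ → ord t ≤ ord s₁ → ord t ≤ ord s₂ →
      ∀ v, edgeMon s(x,y) v ≤ mlcm (σ.filter fun g => ord t ≤ ord g) v := by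
    intro t ht hts1 hts2 v
    have hm1 : s₁ ∈ σ.filter fun g => ord t ≤ ord g := Finset.mem_filter.mpr ⟨h1, hts1⟩
    have hm2 : s₂ ∈ σ.filter fun g => ord t ≤ ord g := Finset.mem_filter.mpr ⟨h2, hts2⟩
    by_cases hvx : v = x
    · subst hvx
      have := le_trans hx (le_mlcm hm1 v)
      rw [edgeMon_apply_mem (by simp)]
      omega
    by_cases hvy : v = y
    · subst hvy
      have := le_trans hy (le_mlcm hm2 v)
      rw [edgeMon_apply_mem (by simp)]
      omega
    · have : edgeMon s(x,y) v = 0 := by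
        simp [edgeMon, Sym2.mem_iff, hvx, hvy]
      omega
  rcases lt_or_gt_of_ne hord with hlt | hlt
  · exact ⟨edgeMon s(x,y), hPM, s₁, h1, ⟨s₂, h2, hlt⟩, hmin s₁ (hσ h1) h1P,
      key s₁ h1 le_rfl (le_of_lt hlt)⟩
  · exact ⟨edgeMon s(x,y), hPM, s₂, h2, ⟨s₁, h1, hlt⟩, hmin s₂ (hσ h2) h2P,
      key s₂ h2 (le_of_lt hlt) le_rfl⟩

lemma dom_isLyubeznik [Fintype V] {G : SimpleGraph V} {x y : V} (hd : Dom G x y) :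
    IsLyubeznik (edgeGens G) := by
  classical
  have hxy := hd.1
  have hxyne : x ≠ y := hxy.ne
  set M := edgeGens G with hM
  set P : V → ℕ := edgeMon s(x,y) with hPdef
  have hPM : P ∈ M := edgeMon_mem hxy
  set E := Fintype.equivFin ↥M with hE
  set ord : (V → ℕ) → ℕ :=
    fun n => if h : n ∈ M then (if n = P then 0 else (E ⟨n, h⟩).val + 1) else 0 with hord
  have hval : ∀ m (hm : m ∈ M), m ≠ P → ord m = (E ⟨m, hm⟩).val + 1 := by
    intro m hm hmp
    simp only [hord, dif_pos hm]
    rw [if_neg hmp]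
  have hordP : ord P = 0 := by
    simp only [hord, dif_pos hPM]
    simp
  have hinj : Set.InjOn ord ↑M := by
    intro m hm n hn hmn
    rw [Finset.mem_coe] at hm hn
    by_cases hmp : m = P <;> by_cases hnp : n = P
    · rw [hmp, hnp]
    · rw [hmp, hordP, hval n hn hnp] at hmn; omega
    · rw [hnp, hordP, hval m hm hmp] at hmn; omega
    · rw [hval m hm hmp, hval n hn hnp] at hmn
      have h2 : (E ⟨m, hm⟩).val = (E ⟨n, hn⟩).val := by omega
      exact congrArg Subtype.val (E.injective (Fin.ext h2))
  have hmin : ∀ n ∈ M, n ≠ P → ord P < ord n := by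
    intro n hn hnp
    rw [hordP, hval n hn hnp]
    omega
  refine ⟨ord, hinj, ?_⟩
  rintro σ ⟨hσM, hncrit⟩ b hbridge
  apply hncrit
  have hbσ := hbridge.1
  obtain ⟨u₀, v₀, hadj, hbE⟩ := mem_edgeGens.mp (hσM hbσ)
  by_cases hbP : b = P
  · -- the bridge is the dominating edge itself
    have hbx : 0 < b x := by
      rw [hbP, hPdef, edgeMon_apply_mem (by simp)]; omega
    have hby : 0 < b y := by
      rw [hbP, hPdef, edgeMon_apply_mem (by simp)]; omega
    obtain ⟨s₁, hs1σ, hs1b, hs1x⟩ := bridge_cover hbridge hbx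
    obtain ⟨s₂, hs2σ, hs2b, hs2y⟩ := bridge_cover hbridge hby
    have hne : s₁ ≠ s₂ := by
      rintro rfl
      obtain ⟨a₁, b₁, hadj₁, hE₁⟩ := mem_edgeGens.mp (hσM hs1σ)
      have hx1 : x ∈ s(a₁, b₁) := edgeMon_pos_iff.mp (hE₁ ▸ hs1x)
      have hy1 : y ∈ s(a₁, b₁) := edgeMon_pos_iff.mp (hE₁ ▸ hs2y)
      exact hs1b (by rw [hE₁, sym2_eq_of_mem hx1 hy1 hxyne, ← hPdef, hbP])
    exact crit_contra hxy hinj hmin hσM hs1σ hs2σ hne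
      (fun h => hs1b (h.trans hbP.symm)) (fun h => hs2b (h.trans hbP.symm)) hs1x hs2y
  · -- the bridge meets {x,y} in exactly one vertex q; r is its other endpoint
    obtain ⟨q, r, heq, hadj2, hq⟩ :
        ∃ q r, s(u₀,v₀) = s(q,r) ∧ G.Adj q r ∧ (q = x ∨ q = y) := by
      rcases hd.2 u₀ v₀ hadj with h|h|h|h
      · exact ⟨u₀, v₀, rfl, hadj, Or.inl h⟩
      · exact ⟨u₀, v₀, rfl, hadj, Or.inr h⟩
      · exact ⟨v₀, u₀, Sym2.eq_swap, hadj.symm, Or.inl h⟩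
      · exact ⟨v₀, u₀, Sym2.eq_swap, hadj.symm, Or.inr h⟩
    have hbE2 : b = edgeMon s(q,r) := by rw [hbE, heq]
    have hrx : r ≠ x := by
      rintro rfl
      rcases hq with rfl | rfl
      · exact hadj2.ne rfl
      · exact hbP (by rw [hbE2, Sym2.eq_swap])
    have hry : r ≠ y := by
      rintro rfl
      rcases hq with rfl | rfl
      · exact hbP hbE2
      · exact hadj2.ne rfl
    have hbr : 0 < b r := by
      rw [hbE2, edgeMon_apply_mem (by simp)]; omega
    obtain ⟨s₂, hs2σ, hs2b, hs2r⟩ := bridge_cover hbridge hbr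
    obtain ⟨u₂, v₂, hadj₂, hs2E⟩ := mem_edgeGens.mp (hσM hs2σ)
    have hrmem : r ∈ s(u₂, v₂) := edgeMon_pos_iff.mp (hs2E ▸ hs2r)
    obtain ⟨q₂, hq₂, he₂⟩ : ∃ q₂, (q₂ = x ∨ q₂ = y) ∧ s(u₂,v₂) = s(q₂, r) := by
      rcases hd.2 u₂ v₂ hadj₂ with h|h|h|h
      · refine ⟨x, Or.inl rfl, ?_⟩
        rcases Sym2.mem_iff.mp hrmem with h'|h'
        · exact absurd (h' ▸ h ▸ rfl : r = x) hrx
        · rw [h, ← h']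
      · refine ⟨y, Or.inr rfl, ?_⟩
        rcases Sym2.mem_iff.mp hrmem with h'|h'
        · exact absurd (h' ▸ h ▸ rfl : r = y) hry
        · rw [h, ← h']
      · refine ⟨x, Or.inl rfl, ?_⟩
        rcases Sym2.mem_iff.mp hrmem with h'|h'
        · rw [h, ← h', Sym2.eq_swap]
        · exact absurd (h' ▸ h ▸ rfl : r = x) hrx
      · refine ⟨y, Or.inr rfl, ?_⟩
        rcases Sym2.mem_iff.mp hrmem with h'|h'
        · rw [h, ← h', Sym2.eq_swap]
        · exact absurd (h' ▸ h ▸ rfl : r = y) hry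
    have hq₂q : q₂ ≠ q := by
      rintro rfl
      exact hs2b (by rw [hs2E, he₂, ← hbE2])
    have hs2P : s₂ ≠ P := by
      intro h
      have h2 : s(q₂, r) = s(x, y) := edgeMon_inj (by rw [← he₂, ← hs2E, h, hPdef])
      have h3 : r ∈ s(x, y) := h2 ▸ (by simp : r ∈ s(q₂, r))
      rcases Sym2.mem_iff.mp h3 with h4 | h4
      · exact hrx h4
      · exact hry h4
    rcases hq with hqx | hqy
    · -- q = x, so q₂ = y
      have hq₂y : q₂ = y := by
        rcases hq₂ with h5 | h5
        · exact absurd (h5.trans hqx.symm) hq₂q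
        · exact h5
      have hbx : 0 < b x := by
        rw [hbE2, edgeMon_apply_mem (Sym2.mem_iff.mpr (Or.inl hqx.symm))]; omega
      have hs2y : 0 < s₂ y := by
        rw [hs2E, he₂, edgeMon_apply_mem (Sym2.mem_iff.mpr (Or.inl hq₂y.symm))]; omega
      exact crit_contra hxy hinj hmin hσM hbσ hs2σ (Ne.symm hs2b) hbP hs2P hbx hs2y
    · -- q = y, so q₂ = x
      have hq₂x : q₂ = x := by
        rcases hq₂ with h5 | h5
        · exact h5
        · exact absurd (h5.trans hqy.symm) hq₂q
      have hby : 0 < b y := by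
        rw [hbE2, edgeMon_apply_mem (Sym2.mem_iff.mpr (Or.inl hqy.symm))]; omega
      have hs2x : 0 < s₂ x := by
        rw [hs2E, he₂, edgeMon_apply_mem (Sym2.mem_iff.mpr (Or.inl hq₂x.symm))]; omega
      exact crit_contra hxy hinj hmin hσM hs2σ hbσ hs2b hs2P hbP hs2x hby


lemma edgeMon_mem' [Fintype V] {G : SimpleGraph V} {e : Sym2 V} (h : e ∈ G.edgeSet) :
    edgeMon e ∈ edgeGens G := by
  unfold edgeGens
  exact Finset.mem_image_of_mem _ (by simp [h])

/-- The key construction: a Lyubeznik-critical 3-subset with a bridge, in the absence of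
a dominating edge. -/
lemma final_contra [Fintype V] {G : SimpleGraph V} {ord : (V → ℕ) → ℕ}
    (hinj : Set.InjOn ord (edgeGens G))
    {x y z w qq rr : V} (hxy : G.Adj x y)
    (hzx : z ≠ x) (hzy : z ≠ y) (hwx : w ≠ x) (hwy : w ≠ y)
    (hq : qq = x ∨ qq = y) (hr : rr = z ∨ rr = w)
    {aE bE : Sym2 V} (haE : aE ∈ G.edgeSet) (hbE : bE ∈ G.edgeSet)
    (hform : (aE = s(z,w) ∧ bE = s(qq,rr)) ∨ (bE = s(z,w) ∧ aE = s(qq,rr)))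
    (hab : aE ≠ bE)
    (hPmin : ∀ e ∈ G.edgeSet, e ≠ s(x,y) → ord (edgeMon s(x,y)) < ord (edgeMon e))
    (hBmin : ∀ e ∈ G.edgeSet, e ≠ s(x,y) →
      (∀ v' ∈ e, v' = x ∨ v' = y ∨ v' = z ∨ v' = w) → ord (edgeMon bE) ≤ ord (edgeMon e)) :
    ∃ σ bb, LyubCritical (edgeGens G) ord σ ∧ IsBridge σ bb := by
  classical
  have hxyE : s(x,y) ∈ G.edgeSet := G.mem_edgeSet.mpr hxy
  set P : V → ℕ := edgeMon s(x,y) with hP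
  set A : V → ℕ := edgeMon aE with hA
  set B : V → ℕ := edgeMon bE with hB
  -- the edge s(qq,rr) is distinct from s(x,y)
  have hqr_ne : s(qq,rr) ≠ s(x,y) := by
    intro h
    have : rr ∈ s(x,y) := h ▸ (by simp : rr ∈ s(qq,rr))
    rcases Sym2.mem_iff.mp this with h' | h' <;> rcases hr with rfl | rfl <;>
      simp_all
  have hzw_ne : s(z,w) ≠ s(x,y) := by
    intro h
    have : z ∈ s(x,y) := h ▸ (by simp : z ∈ s(z,w))
    rcases Sym2.mem_iff.mp this with h' | h'
    · exact hzx h'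
    · exact hzy h'
  have haP : aE ≠ s(x,y) := by rcases hform with ⟨h1, h2⟩ | ⟨h1, h2⟩ <;> rw [‹aE = _›] <;>
    first | exact hzw_ne | exact hqr_ne
  have hbP : bE ≠ s(x,y) := by rcases hform with ⟨h1, h2⟩ | ⟨h1, h2⟩ <;> rw [‹bE = _›] <;>
    first | exact hzw_ne | exact hqr_ne
  -- support facts
  have hsuppA : ∀ v' ∈ aE, v' = qq ∨ v' = z ∨ v' = w := by
    intro v' hv'
    rcases hform with ⟨h1, h2⟩ | ⟨h1, h2⟩
    · rw [h1] at hv'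
      rcases Sym2.mem_iff.mp hv' with rfl | rfl
      · exact Or.inr (Or.inl rfl)
      · exact Or.inr (Or.inr rfl)
    · rw [h2] at hv'
      rcases Sym2.mem_iff.mp hv' with rfl | rfl
      · exact Or.inl rfl
      · rcases hr with rfl | rfl
        · exact Or.inr (Or.inl rfl)
        · exact Or.inr (Or.inr rfl)
  have hsuppB : ∀ v' ∈ bE, v' = qq ∨ v' = z ∨ v' = w := by
    intro v' hv'
    rcases hform with ⟨h1, h2⟩ | ⟨h1, h2⟩
    · rw [h2] at hv'
      rcases Sym2.mem_iff.mp hv' with rfl | rfl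
      · exact Or.inl rfl
      · rcases hr with rfl | rfl
        · exact Or.inr (Or.inl rfl)
        · exact Or.inr (Or.inr rfl)
    · rw [h1] at hv'
      rcases Sym2.mem_iff.mp hv' with rfl | rfl
      · exact Or.inr (Or.inl rfl)
      · exact Or.inr (Or.inr rfl)
  have hqxy : qq = x ∨ qq = y ∨ qq = z ∨ qq = w := by tauto
  -- ord facts
  have hAM : A ∈ edgeGens G := edgeMon_mem' haE
  have hBM : B ∈ edgeGens G := edgeMon_mem' hbE
  have hPM : P ∈ edgeGens G := edgeMon_mem' hxyE
  have hPA : ord P < ord A := hPmin aE haE haP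
  have hPB : ord P < ord B := hPmin bE hbE hbP
  have hAB_mon : A ≠ B := fun h => hab (edgeMon_inj h)
  have hBA : ord B < ord A := by
    have h1 : ord B ≤ ord A := by
      apply hBmin aE haE haP
      intro v' hv'
      rcases hsuppA v' hv' with rfl | rfl | rfl
      · exact hqxy
      · exact Or.inr (Or.inr (Or.inl rfl))
      · exact Or.inr (Or.inr (Or.inr rfl))
    rcases lt_or_eq_of_le h1 with h2 | h2
    · exact h2
    · exact absurd (hinj hBM hAM h2) (Ne.symm hAB_mon)
  set σ : Finset (V → ℕ) := insert A (insert B {P}) with hσ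
  have hAσ : A ∈ σ := by simp [hσ]
  have hBσ : B ∈ σ := by simp [hσ]
  have hPσ : P ∈ σ := by simp [hσ]
  have hmemσ : ∀ g ∈ σ, g = A ∨ g = B ∨ g = P := by
    intro g hg
    simpa [hσ] using hg
  have hσM : σ ⊆ edgeGens G := by
    intro g hg
    rcases hmemσ g hg with rfl | rfl | rfl
    · exact hAM
    · exact hBM
    · exact hPM
  -- the bridge: the monomial of s(qq,rr)
  obtain ⟨gE, hE, hgZ, hhQ, hor⟩ : ∃ gE hE, gE = s(z,w) ∧ hE = s(qq,rr) ∧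
      ((gE = aE ∧ hE = bE) ∨ (gE = bE ∧ hE = aE)) := by
    rcases hform with ⟨h1, h2⟩ | ⟨h1, h2⟩
    · exact ⟨aE, bE, h1, h2, Or.inl ⟨rfl, rfl⟩⟩
    · exact ⟨bE, aE, h1, h2, Or.inr ⟨rfl, rfl⟩⟩
  set H : V → ℕ := edgeMon hE with hHdef
  set GM : V → ℕ := edgeMon gE with hGMdef
  have hHσ : H ∈ σ := by
    rcases hor with ⟨h1, h2⟩ | ⟨h1, h2⟩
    · rw [hHdef, h2]; exact hBσ
    · rw [hHdef, h2]; exact hAσ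
  have hGMσ : GM ∈ σ := by
    rcases hor with ⟨h1, h2⟩ | ⟨h1, h2⟩
    · rw [hGMdef, h1]; exact hAσ
    · rw [hGMdef, h1]; exact hBσ
  have hGH_ne : GM ≠ H := by
    intro h
    apply hab
    rcases hor with ⟨h1, h2⟩ | ⟨h1, h2⟩
    · rw [← h1, ← h2]; exact edgeMon_inj h
    · rw [← h1, ← h2]; exact (edgeMon_inj h).symm
  have hPH_ne : P ≠ H := by
    intro h
    exact hqr_ne (hhQ ▸ (edgeMon_inj h.symm))
  have hqqxy : qq ∈ s(x,y) := by
    rcases hq with rfl | rfl <;> simp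
  have hrrzw : rr ∈ s(z,w) := by
    rcases hr with rfl | rfl <;> simp
  have hbridge : IsBridge σ H := by
    refine isBridge_of_le hHσ ?_
    intro v
    by_cases hv : v ∈ hE
    · rw [hhQ] at hv
      rcases Sym2.mem_iff.mp hv with rfl | rfl
      · refine ⟨P, hPσ, hPH_ne, ?_⟩
        rw [hHdef, hhQ, hP, edgeMon_apply_mem (by simp), edgeMon_apply_mem hqqxy]
      · refine ⟨GM, hGMσ, hGH_ne, ?_⟩
        rw [hHdef, hhQ, hGMdef, hgZ, edgeMon_apply_mem (by simp), edgeMon_apply_mem hrrzw]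
    · refine ⟨P, hPσ, hPH_ne, ?_⟩
      have h0 : H v = 0 := by rw [hHdef]; simp [edgeMon, hv]
      rw [h0]
      exact Nat.zero_le _
  have hcrit : LyubCritical (edgeGens G) ord σ := by
    refine ⟨hσM, ?_⟩
    rintro ⟨m, hm, t, ht, ⟨u, hu, htu⟩, hmt, hdvd⟩
    obtain ⟨um, vm, hadjm, hmE⟩ := mem_edgeGens.mp hm
    have hmnd : ¬ (s(um,vm)).IsDiag := by simp [hadjm.ne]
    rcases hmemσ t ht with rfl | rfl | rfl
    · -- t = A (the largest element): only A itself survives the filter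
      have hmem_a : ∀ v' ∈ s(um,vm), v' ∈ aE := by
        intro v' hv'
        have h1 : 0 < m v' := by rw [hmE, edgeMon_apply_mem hv']; omega
        have h2 : 0 < mlcm (σ.filter fun g => ord A ≤ ord g) v' :=
          lt_of_lt_of_le h1 (hdvd v')
        obtain ⟨g, hg, hgv⟩ := mlcm_pos h2
        have hgσ := Finset.mem_of_mem_filter g hg
        have hgord : ord A ≤ ord g := (Finset.mem_filter.mp hg).2
        rcases hmemσ g hgσ with rfl | rfl | rfl
        · rw [hA] at hgv; exact edgeMon_pos_iff.mp hgv
        · omega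
        · omega
      obtain ⟨a1, a2, haf⟩ : ∃ a1 a2, aE = s(a1, a2) := by
        rcases hform with ⟨h1, -⟩ | ⟨-, h1⟩
        · exact ⟨z, w, h1⟩
        · exact ⟨qq, rr, h1⟩
      have heqa : s(um, vm) = s(a1, a2) := by
        refine sym2_eq_of_subset hmnd ?_
        intro v' hv'
        have h3 := hmem_a v' hv'
        rw [haf] at h3
        exact Sym2.mem_iff.mp h3
      have hmA : m = A := by rw [hmE, hA, haf, heqa]
      rw [hmA] at hmt
      exact absurd hmt (lt_irrefl _)
    · -- t = B: the filter is contained in {A, B}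
      have hmem_ab : ∀ v' ∈ s(um,vm), v' ∈ aE ∨ v' ∈ bE := by
        intro v' hv'
        have h1 : 0 < m v' := by rw [hmE, edgeMon_apply_mem hv']; omega
        have h2 : 0 < mlcm (σ.filter fun g => ord B ≤ ord g) v' :=
          lt_of_lt_of_le h1 (hdvd v')
        obtain ⟨g, hg, hgv⟩ := mlcm_pos h2
        have hgσ := Finset.mem_of_mem_filter g hg
        have hgord : ord B ≤ ord g := (Finset.mem_filter.mp hg).2
        rcases hmemσ g hgσ with rfl | rfl | rfl
        · rw [hA] at hgv; exact Or.inl (edgeMon_pos_iff.mp hgv)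
        · rw [hB] at hgv; exact Or.inr (edgeMon_pos_iff.mp hgv)
        · omega
      have hqq_only : ∀ v' ∈ s(um,vm), v' = qq ∨ v' = z ∨ v' = w := by
        intro v' hv'
        rcases hmem_ab v' hv' with h3 | h3
        · exact hsuppA v' h3
        · exact hsuppB v' h3
      have hsubxyzw : ∀ v' ∈ s(um,vm), v' = x ∨ v' = y ∨ v' = z ∨ v' = w := by
        intro v' hv'
        rcases hqq_only v' hv' with rfl | rfl | rfl
        · exact hqxy
        · exact Or.inr (Or.inr (Or.inl rfl))
        · exact Or.inr (Or.inr (Or.inr rfl))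
      have hmP : s(um,vm) ≠ s(x,y) := by
        intro h
        have hx' : x ∈ s(um,vm) := by rw [h]; simp
        have hy' : y ∈ s(um,vm) := by rw [h]; simp
        rcases hqq_only x hx' with h1|h1|h1
        · rcases hqq_only y hy' with h2|h2|h2
          · exact hxy.ne (h1.trans h2.symm)
          · exact hzy h2.symm
          · exact hwy h2.symm
        · exact hzx h1.symm
        · exact hwx h1.symm
      have h4 := hBmin s(um,vm) (G.mem_edgeSet.mpr hadjm) hmP hsubxyzw
      rw [← hmE] at h4
      omega
    · -- t = P: nothing is below P
      by_cases hmp : s(um, vm) = s(x,y)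
      · rw [hmE, hmp, ← hP] at hmt
        exact absurd hmt (lt_irrefl _)
      · have h4 := hPmin _ (G.mem_edgeSet.mpr hadjm) hmp
        rw [← hmE] at h4
        omega
  exact ⟨σ, H, hcrit, hbridge⟩


lemma sym2_exists (e : Sym2 V) : ∃ a b, e = s(a, b) := by
  induction e using Sym2.ind with
  | _ a b => exact ⟨a, b, rfl⟩

lemma isLyubeznik_dom [Fintype V] {G : SimpleGraph V} (hconn : G.Connected)
    (hedge : G.edgeSet.Nonempty) (hly : IsLyubeznik (edgeGens G)) :
    ∃ x y, Dom G x y := by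
  classical
  obtain ⟨ord, hinj, hgood⟩ := hly
  by_contra hndom
  push_neg at hndom
  set Ef : Finset (Sym2 V) := Finset.univ.filter (fun e => e ∈ G.edgeSet) with hEf
  have hEfne : Ef.Nonempty := by
    obtain ⟨e, he⟩ := hedge
    exact ⟨e, by simp [hEf, he]⟩
  obtain ⟨p, hpEf, hpmin⟩ := Ef.exists_min_image (fun e => ord (edgeMon e)) hEfne
  have hpE : p ∈ G.edgeSet := by simpa [hEf] using hpEf
  obtain ⟨x, y, hpeq⟩ := sym2_exists p
  subst hpeq
  have hxy : G.Adj x y := G.mem_edgeSet.mp hpE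
  have hPmin : ∀ e ∈ G.edgeSet, e ≠ s(x,y) → ord (edgeMon s(x,y)) < ord (edgeMon e) := by
    intro e he hne
    have h1 : ord (edgeMon s(x,y)) ≤ ord (edgeMon e) := hpmin e (by simp [hEf, he])
    rcases lt_or_eq_of_le h1 with h2 | h2
    · exact h2
    · exact absurd (edgeMon_inj (hinj (edgeMon_mem' hpE) (edgeMon_mem' he) h2))
        (Ne.symm hne)
  have h1 : ¬ ∀ u v, G.Adj u v → u = x ∨ u = y ∨ v = x ∨ v = y :=
    fun h => hndom x y ⟨hxy, h⟩
  push_neg at h1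
  obtain ⟨u, v, huv, hux, huy, hvx, hvy⟩ := h1
  obtain ⟨W⟩ := hconn u x
  obtain ⟨z, w, hzw, hqz, hzx, hzy, hwx, hwy⟩ := walk_structure W hux huy v huv hvx hvy
  set S : Finset (Sym2 V) :=
    Ef.filter (fun e => e ≠ s(x,y) ∧ ∀ v' ∈ e, v' = x ∨ v' = y ∨ v' = z ∨ v' = w) with hS
  have hzwS : s(z,w) ∈ S := by
    refine Finset.mem_filter.mpr ⟨by simp [hEf, G.mem_edgeSet.mpr hzw], ?_, ?_⟩
    · intro h
      have h2 : z ∈ s(x,y) := by rw [← h]; simp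
      rcases Sym2.mem_iff.mp h2 with h' | h'
      · exact hzx h'
      · exact hzy h'
    · intro v' hv'
      rcases Sym2.mem_iff.mp hv' with rfl | rfl
      · exact Or.inr (Or.inr (Or.inl rfl))
      · exact Or.inr (Or.inr (Or.inr rfl))
  obtain ⟨bE, hbS, hbmin⟩ := S.exists_min_image (fun e => ord (edgeMon e)) ⟨_, hzwS⟩
  obtain ⟨hbEf, hbne, hbsub⟩ := Finset.mem_filter.mp hbS
  have hbE : bE ∈ G.edgeSet := by simpa [hEf] using hbEf
  have hBmin : ∀ e ∈ G.edgeSet, e ≠ s(x,y) →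
      (∀ v' ∈ e, v' = x ∨ v' = y ∨ v' = z ∨ v' = w) → ord (edgeMon bE) ≤ ord (edgeMon e) := by
    intro e he hne hsub
    exact hbmin e (Finset.mem_filter.mpr ⟨by simp [hEf, he], hne, hsub⟩)
  by_cases hbg : bE = s(z,w)
  · -- the minimum is s(z,w) itself; take the companion edge s(q₀, z)
    obtain ⟨q₀, hq₀, hadjq⟩ : ∃ q₀, (q₀ = x ∨ q₀ = y) ∧ G.Adj q₀ z := by
      rcases hqz with h | h
      · exact ⟨x, Or.inl rfl, h⟩
      · exact ⟨y, Or.inr rfl, h⟩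
    have hane : s(q₀, z) ≠ bE := by
      rw [hbg]
      intro h
      have h2 : q₀ ∈ s(z,w) := by rw [← h]; simp
      rcases Sym2.mem_iff.mp h2 with h' | h' <;> rcases hq₀ with rfl | rfl <;> simp_all
    obtain ⟨σ, bb, hcrit, hbr⟩ := final_contra hinj hxy hzx hzy hwx hwy hq₀ (Or.inl rfl)
      (G.mem_edgeSet.mpr hadjq) hbE (Or.inr ⟨hbg, rfl⟩) hane hPmin hBmin
    exact hgood σ hcrit bb hbr
  · -- the minimum joins {x,y} to {z,w}
    obtain ⟨b1, b2, hbf⟩ := sym2_exists bE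
    have hadjb : G.Adj b1 b2 := G.mem_edgeSet.mp (by rwa [hbf] at hbE)
    have hne12 : b1 ≠ b2 := hadjb.ne
    obtain ⟨qq, rr, hqc, hrc, hbf2⟩ :
        ∃ qq rr, (qq = x ∨ qq = y) ∧ (rr = z ∨ rr = w) ∧ bE = s(qq, rr) := by
      have h2 := hbsub b1 (by rw [hbf]; simp)
      have h3 := hbsub b2 (by rw [hbf]; simp)
      rcases h2 with rfl | rfl | rfl | rfl <;> rcases h3 with rfl | rfl | rfl | rfl
      · exact absurd rfl hne12
      · exact absurd hbf hbne
      · exact ⟨b1, b2, Or.inl rfl, Or.inl rfl, hbf⟩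
      · exact ⟨b1, b2, Or.inl rfl, Or.inr rfl, hbf⟩
      · exact absurd (hbf.trans Sym2.eq_swap) hbne
      · exact absurd rfl hne12
      · exact ⟨b1, b2, Or.inr rfl, Or.inl rfl, hbf⟩
      · exact ⟨b1, b2, Or.inr rfl, Or.inr rfl, hbf⟩
      · exact ⟨b2, b1, Or.inl rfl, Or.inl rfl, hbf.trans Sym2.eq_swap⟩
      · exact ⟨b2, b1, Or.inr rfl, Or.inl rfl, hbf.trans Sym2.eq_swap⟩
      · exact absurd rfl hne12
      · exact absurd hbf hbg
      · exact ⟨b2, b1, Or.inl rfl, Or.inr rfl, hbf.trans Sym2.eq_swap⟩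
      · exact ⟨b2, b1, Or.inr rfl, Or.inr rfl, hbf.trans Sym2.eq_swap⟩
      · exact absurd (hbf.trans Sym2.eq_swap) hbg
      · exact absurd rfl hne12
    have hane : s(z,w) ≠ bE := fun h => hbg h.symm
    obtain ⟨σ, bb, hcrit, hbr⟩ := final_contra hinj hxy hzx hzy hwx hwy hqc hrc
      (G.mem_edgeSet.mpr hzw) hbE (Or.inl ⟨rfl, hbf2⟩) hane hPmin hBmin
    exact hgood σ hcrit bb hbr


lemma build_iso [Fintype V] {G : SimpleGraph V} {x y : V} (hxy : G.Adj x y)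
    {a b c : ℕ} {fA : Fin a → V} {fB : Fin b → V} {fC : Fin c → V}
    (hAne : ∀ i, fA i ≠ x ∧ fA i ≠ y) (hAadj : ∀ i, G.Adj x (fA i))
    (hAnadj : ∀ i, ¬ G.Adj y (fA i))
    (hBne : ∀ j, fB j ≠ x ∧ fB j ≠ y) (hBadj : ∀ j, G.Adj y (fB j))
    (hBnadj : ∀ j, ¬ G.Adj x (fB j))
    (hCne : ∀ k, fC k ≠ x ∧ fC k ≠ y) (hCadjx : ∀ k, G.Adj x (fC k))
    (hCadjy : ∀ k, G.Adj y (fC k))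
    (hAinj : Function.Injective fA) (hBinj : Function.Injective fB)
    (hCinj : Function.Injective fC)
    (hsurj : ∀ v, v = x ∨ v = y ∨ (∃ i, v = fA i) ∨ (∃ j, v = fB j) ∨ ∃ k, v = fC k)
    (hno : ∀ u v, u ≠ x → u ≠ y → v ≠ x → v ≠ y → ¬ G.Adj u v) :
    Nonempty (G ≃g LGraph a b c) := by
  classical
  have hFin : ∀ i : Fin 2, i = 0 ∨ i = 1 := fun i => by omega
  set ψ : LV a b c → V :=
    Sum.elim (fun i => if i = 0 then x else y)
      (Sum.elim fA (Sum.elim fB fC)) with hψdef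
  have hψ1 : ψ (Sum.inl 0) = x := by rw [hψdef]; simp
  have hψ2 : ψ (Sum.inl 1) = y := by
    rw [hψdef]
    simp only [Sum.elim_inl]
    rw [if_neg (by decide)]
  have hψA : ∀ i, ψ (Sum.inr (Sum.inl i)) = fA i := by intro i; rw [hψdef]; simp
  have hψB : ∀ j, ψ (Sum.inr (Sum.inr (Sum.inl j))) = fB j := by intro j; rw [hψdef]; simp
  have hψC : ∀ k, ψ (Sum.inr (Sum.inr (Sum.inr k))) = fC k := by intro k; rw [hψdef]; simp
  have hinj : Function.Injective ψ := by
    intro t1 t2 h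
    rcases t1 with i1 | (a1 | b1 | c1) <;> rcases t2 with i2 | (a2 | b2 | c2)
    · rcases hFin i1 with rfl | rfl <;> rcases hFin i2 with rfl | rfl
      · rfl
      · rw [hψ1, hψ2] at h; exact absurd h hxy.ne
      · rw [hψ1, hψ2] at h; exact absurd h.symm hxy.ne
      · rfl
    · rcases hFin i1 with rfl | rfl
      · rw [hψ1, hψA] at h; exact absurd h.symm (hAne a2).1
      · rw [hψ2, hψA] at h; exact absurd h.symm (hAne a2).2
    · rcases hFin i1 with rfl | rfl
      · rw [hψ1, hψB] at h; exact absurd h.symm (hBne b2).1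
      · rw [hψ2, hψB] at h; exact absurd h.symm (hBne b2).2
    · rcases hFin i1 with rfl | rfl
      · rw [hψ1, hψC] at h; exact absurd h.symm (hCne c2).1
      · rw [hψ2, hψC] at h; exact absurd h.symm (hCne c2).2
    · rcases hFin i2 with rfl | rfl
      · rw [hψ1, hψA] at h; exact absurd h (hAne a1).1
      · rw [hψ2, hψA] at h; exact absurd h (hAne a1).2
    · rw [hψA, hψA] at h; rw [hAinj h]
    · rw [hψA, hψB] at h
      exact absurd (h ▸ hBadj b2) (hAnadj a1)
    · rw [hψA, hψC] at h
      exact absurd (h ▸ hCadjy c2) (hAnadj a1)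
    · rcases hFin i2 with rfl | rfl
      · rw [hψ1, hψB] at h; exact absurd h (hBne b1).1
      · rw [hψ2, hψB] at h; exact absurd h (hBne b1).2
    · rw [hψA, hψB] at h
      exact absurd (h ▸ hAadj a2) (hBnadj b1)
    · rw [hψB, hψB] at h; rw [hBinj h]
    · rw [hψB, hψC] at h
      exact absurd (h ▸ hCadjx c2) (hBnadj b1)
    · rcases hFin i2 with rfl | rfl
      · rw [hψ1, hψC] at h; exact absurd h (hCne c1).1
      · rw [hψ2, hψC] at h; exact absurd h (hCne c1).2
    · rw [hψA, hψC] at h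
      exact absurd (h.symm ▸ hAnadj a2) (fun hh => hh (hCadjy c1))
    · rw [hψB, hψC] at h
      exact absurd (h.symm ▸ hBnadj b2) (fun hh => hh (hCadjx c1))
    · rw [hψC, hψC] at h; rw [hCinj h]
  have hsurj' : Function.Surjective ψ := by
    intro v
    rcases hsurj v with rfl | rfl | ⟨i, rfl⟩ | ⟨j, rfl⟩ | ⟨k, rfl⟩
    · exact ⟨Sum.inl 0, hψ1⟩
    · exact ⟨Sum.inl 1, hψ2⟩
    · exact ⟨Sum.inr (Sum.inl i), hψA i⟩
    · exact ⟨Sum.inr (Sum.inr (Sum.inl j)), hψB j⟩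
    · exact ⟨Sum.inr (Sum.inr (Sum.inr k)), hψC k⟩
  have hmap : ∀ t1 t2, G.Adj (ψ t1) (ψ t2) ↔ (LGraph a b c).Adj t1 t2 := by
    intro t1 t2
    rcases t1 with i1 | (a1 | b1 | c1) <;> rcases t2 with i2 | (a2 | b2 | c2)
    · rcases hFin i1 with rfl | rfl <;> rcases hFin i2 with rfl | rfl
      · rw [hψ1]; simp [LGraph, SimpleGraph.fromRel_adj]
      · rw [hψ1, hψ2]; simp [LGraph, SimpleGraph.fromRel_adj, hxy, Fin.ext_iff]
      · rw [hψ1, hψ2]; simp [LGraph, SimpleGraph.fromRel_adj, hxy.symm, Fin.ext_iff]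
      · rw [hψ2]; simp [LGraph, SimpleGraph.fromRel_adj]
    · rcases hFin i1 with rfl | rfl
      · rw [hψ1, hψA]; simp [LGraph, SimpleGraph.fromRel_adj, hAadj a2]
      · rw [hψ2, hψA]; simp [LGraph, SimpleGraph.fromRel_adj, hAnadj a2, Fin.ext_iff]
    · rcases hFin i1 with rfl | rfl
      · rw [hψ1, hψB]; simp [LGraph, SimpleGraph.fromRel_adj, hBnadj b2, Fin.ext_iff]
      · rw [hψ2, hψB]; simp [LGraph, SimpleGraph.fromRel_adj, hBadj b2, Fin.ext_iff]
    · rcases hFin i1 with rfl | rfl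
      · rw [hψ1, hψC]; simp [LGraph, SimpleGraph.fromRel_adj, hCadjx c2]
      · rw [hψ2, hψC]; simp [LGraph, SimpleGraph.fromRel_adj, hCadjy c2, Fin.ext_iff]
    · rcases hFin i2 with rfl | rfl
      · rw [hψ1, hψA]; simp [LGraph, SimpleGraph.fromRel_adj, (hAadj a1).symm]
      · rw [hψ2, hψA]
        have hh : ¬ G.Adj (fA a1) y := fun h => hAnadj a1 h.symm
        simp [LGraph, SimpleGraph.fromRel_adj, hh, Fin.ext_iff]
    · rw [hψA, hψA]
      simp [LGraph, SimpleGraph.fromRel_adj,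
        hno _ _ (hAne a1).1 (hAne a1).2 (hAne a2).1 (hAne a2).2]
    · rw [hψA, hψB]
      simp [LGraph, SimpleGraph.fromRel_adj,
        hno _ _ (hAne a1).1 (hAne a1).2 (hBne b2).1 (hBne b2).2]
    · rw [hψA, hψC]
      simp [LGraph, SimpleGraph.fromRel_adj,
        hno _ _ (hAne a1).1 (hAne a1).2 (hCne c2).1 (hCne c2).2]
    · rcases hFin i2 with rfl | rfl
      · rw [hψ1, hψB]
        have hh : ¬ G.Adj (fB b1) x := fun h => hBnadj b1 h.symm
        simp [LGraph, SimpleGraph.fromRel_adj, hh, Fin.ext_iff]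
      · rw [hψ2, hψB]; simp [LGraph, SimpleGraph.fromRel_adj, (hBadj b1).symm, Fin.ext_iff]
    · rw [hψA, hψB]
      simp [LGraph, SimpleGraph.fromRel_adj,
        hno _ _ (hBne b1).1 (hBne b1).2 (hAne a2).1 (hAne a2).2]
    · rw [hψB, hψB]
      simp [LGraph, SimpleGraph.fromRel_adj,
        hno _ _ (hBne b1).1 (hBne b1).2 (hBne b2).1 (hBne b2).2]
    · rw [hψB, hψC]
      simp [LGraph, SimpleGraph.fromRel_adj,
        hno _ _ (hBne b1).1 (hBne b1).2 (hCne c2).1 (hCne c2).2]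
    · rcases hFin i2 with rfl | rfl
      · rw [hψ1, hψC]; simp [LGraph, SimpleGraph.fromRel_adj, (hCadjx c1).symm]
      · rw [hψ2, hψC]; simp [LGraph, SimpleGraph.fromRel_adj, (hCadjy c1).symm, Fin.ext_iff]
    · rw [hψA, hψC]
      simp [LGraph, SimpleGraph.fromRel_adj,
        hno _ _ (hCne c1).1 (hCne c1).2 (hAne a2).1 (hAne a2).2]
    · rw [hψB, hψC]
      simp [LGraph, SimpleGraph.fromRel_adj,
        hno _ _ (hCne c1).1 (hCne c1).2 (hBne b2).1 (hBne b2).2]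
    · rw [hψC, hψC]
      simp [LGraph, SimpleGraph.fromRel_adj,
        hno _ _ (hCne c1).1 (hCne c1).2 (hCne c2).1 (hCne c2).2]
  exact ⟨(⟨Equiv.ofBijective ψ ⟨hinj, hsurj'⟩, fun {t1 t2} => hmap t1 t2⟩ :
    LGraph a b c ≃g G).symm⟩


lemma dom_iso [Fintype V] {G : SimpleGraph V} (hconn : G.Connected) {x y : V}
    (hd : Dom G x y) : ∃ a b c : ℕ, Nonempty (G ≃g LGraph a b c) := by
  classical
  have hxy := hd.1
  have hout : ∀ v, v ≠ x → v ≠ y → (G.Adj x v ∨ G.Adj y v) := by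
    intro v hvx hvy
    obtain ⟨w', hw'⟩ : ∃ w', G.Adj v w' := by
      obtain ⟨W⟩ := hconn v x
      cases W with
      | nil => exact absurd rfl hvx
      | cons h _ => exact ⟨_, h⟩
    rcases hd.2 v w' hw' with h | h | h | h
    · exact absurd h hvx
    · exact absurd h hvy
    · exact Or.inl (h ▸ hw').symm
    · exact Or.inr (h ▸ hw').symm
  have hno : ∀ u v, u ≠ x → u ≠ y → v ≠ x → v ≠ y → ¬ G.Adj u v := by
    intro u v h1 h2 h3 h4 h
    rcases hd.2 u v h with h' | h' | h' | h'
    exacts [h1 h', h2 h', h3 h', h4 h']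
  let SA := {v : V // v ≠ x ∧ v ≠ y ∧ G.Adj x v ∧ ¬ G.Adj y v}
  let SB := {v : V // v ≠ x ∧ v ≠ y ∧ G.Adj y v ∧ ¬ G.Adj x v}
  let SC := {v : V // v ≠ x ∧ v ≠ y ∧ G.Adj x v ∧ G.Adj y v}
  let eA : SA ≃ Fin (Fintype.card SA) := Fintype.equivFin SA
  let eB : SB ≃ Fin (Fintype.card SB) := Fintype.equivFin SB
  let eC : SC ≃ Fin (Fintype.card SC) := Fintype.equivFin SC
  refine ⟨Fintype.card SA, Fintype.card SB, Fintype.card SC, ?_⟩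
  refine build_iso hxy (fA := fun i => (eA.symm i).1) (fB := fun j => (eB.symm j).1)
    (fC := fun k => (eC.symm k).1) ?_ ?_ ?_ ?_ ?_ ?_ ?_ ?_ ?_ ?_ ?_ ?_ ?_ hno
  · exact fun i => ⟨(eA.symm i).2.1, (eA.symm i).2.2.1⟩
  · exact fun i => (eA.symm i).2.2.2.1
  · exact fun i => (eA.symm i).2.2.2.2
  · exact fun j => ⟨(eB.symm j).2.1, (eB.symm j).2.2.1⟩
  · exact fun j => (eB.symm j).2.2.2.1
  · exact fun j => (eB.symm j).2.2.2.2
  · exact fun k => ⟨(eC.symm k).2.1, (eC.symm k).2.2.1⟩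
  · exact fun k => (eC.symm k).2.2.2.1
  · exact fun k => (eC.symm k).2.2.2.2
  · exact fun i1 i2 h => eA.symm.injective (Subtype.ext h)
  · exact fun j1 j2 h => eB.symm.injective (Subtype.ext h)
  · exact fun k1 k2 h => eC.symm.injective (Subtype.ext h)
  · intro v
    by_cases hvx : v = x
    · exact Or.inl hvx
    by_cases hvy : v = y
    · exact Or.inr (Or.inl hvy)
    by_cases hax : G.Adj x v <;> by_cases hay : G.Adj y v
    · exact Or.inr (Or.inr (Or.inr (Or.inr
        ⟨eC (⟨v, hvx, hvy, hax, hay⟩ : SC), by simp⟩)))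
    · exact Or.inr (Or.inr (Or.inl
        ⟨eA (⟨v, hvx, hvy, hax, hay⟩ : SA), by simp⟩))
    · exact Or.inr (Or.inr (Or.inr (Or.inl
        ⟨eB (⟨v, hvx, hvy, hay, hax⟩ : SB), by simp⟩)))
    · rcases hout v hvx hvy with h | h
      · exact absurd h hax
      · exact absurd h hay

end Aux







/-- **Theorem 3.7.** For a finite connected simple graph `G` with at least one edge,
the edge ideal `I(G)` is Lyubeznik iff `G ≅ L(a,b,c)` for some `a, b, c ∈ ℕ`. -/
theorem edgeIdeal_isLyubeznik_iff {V : Type} [Fintype V] (G : SimpleGraph V)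
    (hconn : G.Connected) (hedge : G.edgeSet.Nonempty) :
    IsLyubeznik (edgeGens G) ↔ ∃ a b c : ℕ, Nonempty (G ≃g LGraph a b c) := by
  constructor
  · intro h
    obtain ⟨x, y, hd⟩ := isLyubeznik_dom hconn hedge h
    exact dom_iso hconn hd
  · rintro ⟨a, b, c, ⟨φ⟩⟩
    obtain ⟨x, y, hd⟩ := iso_dom φ
    exact dom_isLyubeznik hd

end ChauHaMaithani
end
end

section
/- Let a, b, c be nonnegative integers and G = L(a,b,c). Then I(G) is Lyubeznik: there exists a total order on mingens(I(G)) with respect to which no Lyubeznik-critical subset has a bridge (so the associated Lyubeznik resolution is minimal). Moreover, when a ≥ 1 or c ≥ 1, the total order yy_b ≻ ⋯ ≻ yy_1 ≻ xx_a ≻ ⋯ ≻ xx_1 ≻ yz_c ≻ ⋯ ≻ yz_1 ≻ xz_c ≻ ⋯ ≻ xz_1 ≻ xy has this property. -/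
open scoped Classical

noncomputable section

namespace ChauHaMaithani

variable {V : Type*}

/-- Vertex weights encoding the total order on the edges of `L(a,b,c)`. -/
def Lwt (a b c : ℕ) : LV a b c → ℕ := fun v =>
  match v with
  | Sum.inl i => if i = 0 then 0 else a + b + c + 1
  | Sum.inr (Sum.inl i) => 2 * (a + b + c + 1) + c + 1 + i.1
  | Sum.inr (Sum.inr (Sum.inl j)) => (a + b + c + 1) + c + a + 1 + j.1
  | Sum.inr (Sum.inr (Sum.inr k)) => (a + b + c + 1) + 1 + k.1

/-- Ranking function realizing the total order
`yy_b ≻ ⋯ ≻ yy_1 ≻ xx_a ≻ ⋯ ≻ xx_1 ≻ yz_c ≻ ⋯ ≻ yz_1 ≻ xz_c ≻ ⋯ ≻ xz_1 ≻ xy`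
on the edge monomials of `L(a,b,c)` (bigger rank = bigger in the order). -/
def ordL (a b c : ℕ) : (LV a b c → ℕ) → ℕ := fun g => ∑ v, Lwt a b c v * g v

section Aux

lemma edgeMon_apply {V : Type*} (u v w : V) :
    edgeMon s(u, v) w = if w = u ∨ w = v then 1 else 0 := by
  simp [edgeMon]

/-- The five kinds of generators. -/
def Exy (a b c : ℕ) : LV a b c → ℕ := edgeMon s(Sum.inl 0, Sum.inl 1)
def Exx (a b c : ℕ) (i : Fin a) : LV a b c → ℕ := edgeMon s(Sum.inl 0, Sum.inr (Sum.inl i))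
def Eyy (a b c : ℕ) (j : Fin b) : LV a b c → ℕ :=
  edgeMon s(Sum.inl 1, Sum.inr (Sum.inr (Sum.inl j)))
def Exz (a b c : ℕ) (k : Fin c) : LV a b c → ℕ :=
  edgeMon s(Sum.inl 0, Sum.inr (Sum.inr (Sum.inr k)))
def Eyz (a b c : ℕ) (k : Fin c) : LV a b c → ℕ :=
  edgeMon s(Sum.inl 1, Sum.inr (Sum.inr (Sum.inr k)))

lemma ordL_pair {a b c : ℕ} {u v : LV a b c} (h : u ≠ v) :
    ordL a b c (edgeMon s(u, v)) = Lwt a b c u + Lwt a b c v := by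
  have key : ∀ w, Lwt a b c w * edgeMon s(u, v) w
      = (if u = w then Lwt a b c u else 0) + (if v = w then Lwt a b c v else 0) := by
    intro w
    rw [edgeMon_apply]
    by_cases h1 : w = u <;> by_cases h2 : w = v
    · exact absurd (h1 ▸ h2) h
    · subst h1; simp [Ne.symm h2]
    · subst h2; simp [Ne.symm h1, h.symm]
    · simp [Ne.symm h1, Ne.symm h2, h1, h2]
  unfold ordL
  simp only [key]
  rw [Finset.sum_add_distrib, Finset.sum_ite_eq, Finset.sum_ite_eq]
  simp

lemma mem_cases {a b c : ℕ} {m : LV a b c → ℕ} (hm : m ∈ edgeGens (LGraph a b c)) :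
    m = Exy a b c ∨ (∃ i, m = Exx a b c i) ∨ (∃ j, m = Eyy a b c j) ∨
      (∃ k, m = Exz a b c k) ∨ (∃ k, m = Eyz a b c k) := by
  simp only [edgeGens, Finset.mem_image, Finset.mem_filter, Finset.mem_univ, true_and] at hm
  obtain ⟨e, he, rfl⟩ := hm
  induction e using Sym2.ind with
  | _ u v =>
    rw [SimpleGraph.mem_edgeSet, LGraph, SimpleGraph.fromRel_adj] at he
    obtain ⟨hne, hr | hr⟩ := he
    · rcases hr with ⟨rfl, rfl⟩ | ⟨i, rfl, rfl⟩ | ⟨j, rfl, rfl⟩ | ⟨k, hu, rfl⟩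
      · exact Or.inl rfl
      · exact Or.inr (Or.inl ⟨i, rfl⟩)
      · exact Or.inr (Or.inr (Or.inl ⟨j, rfl⟩))
      · rcases hu with rfl | rfl
        · exact Or.inr (Or.inr (Or.inr (Or.inl ⟨k, rfl⟩)))
        · exact Or.inr (Or.inr (Or.inr (Or.inr ⟨k, rfl⟩)))
    · rcases hr with ⟨rfl, rfl⟩ | ⟨i, rfl, rfl⟩ | ⟨j, rfl, rfl⟩ | ⟨k, hv, rfl⟩
      · exact Or.inl (by rw [Sym2.eq_swap]; rfl)
      · exact Or.inr (Or.inl ⟨i, by rw [Sym2.eq_swap]; rfl⟩)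
      · exact Or.inr (Or.inr (Or.inl ⟨j, by rw [Sym2.eq_swap]; rfl⟩))
      · rcases hv with rfl | rfl
        · exact Or.inr (Or.inr (Or.inr (Or.inl ⟨k, by rw [Sym2.eq_swap]; rfl⟩)))
        · exact Or.inr (Or.inr (Or.inr (Or.inr ⟨k, by rw [Sym2.eq_swap]; rfl⟩)))

lemma Exy_mem (a b c : ℕ) : Exy a b c ∈ edgeGens (LGraph a b c) := by
  simp only [edgeGens, Finset.mem_image, Finset.mem_filter, Finset.mem_univ, true_and]
  refine ⟨s(Sum.inl 0, Sum.inl 1), ?_, rfl⟩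
  rw [SimpleGraph.mem_edgeSet, LGraph, SimpleGraph.fromRel_adj]
  exact ⟨by simp, Or.inl (Or.inl ⟨rfl, rfl⟩)⟩

end Aux
section Aux2
variable {a b c : ℕ}

lemma ord_Exy : ordL a b c (Exy a b c) = a + b + c + 1 := by
  rw [Exy, ordL_pair (by simp)]; simp [Lwt]

lemma ord_Exx (i : Fin a) : ordL a b c (Exx a b c i) = 2 * (a + b + c + 1) + c + 1 + i.1 := by
  rw [Exx, ordL_pair (by simp)]; simp [Lwt]

lemma ord_Eyy (j : Fin b) :
    ordL a b c (Eyy a b c j) = 2 * (a + b + c + 1) + c + a + 1 + j.1 := by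
  rw [Eyy, ordL_pair (by simp)]; simp [Lwt]; ring

lemma ord_Exz (k : Fin c) : ordL a b c (Exz a b c k) = (a + b + c + 1) + 1 + k.1 := by
  rw [Exz, ordL_pair (by simp)]; simp [Lwt]

lemma ord_Eyz (k : Fin c) : ordL a b c (Eyz a b c k) = 2 * (a + b + c + 1) + 1 + k.1 := by
  rw [Eyz, ordL_pair (by simp)]; simp [Lwt]; ring

-- coverage characterizations
lemma cover_x {g : LV a b c → ℕ} (hg : g ∈ edgeGens (LGraph a b c))
    (hx : g (Sum.inl 0) ≠ 0) :
    g = Exy a b c ∨ (∃ i, g = Exx a b c i) ∨ (∃ k, g = Exz a b c k) := by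
  rcases mem_cases hg with rfl | ⟨i, rfl⟩ | ⟨j, rfl⟩ | ⟨k, rfl⟩ | ⟨k, rfl⟩
  · exact Or.inl rfl
  · exact Or.inr (Or.inl ⟨i, rfl⟩)
  · exact absurd (by simp [Eyy, edgeMon_apply]) hx
  · exact Or.inr (Or.inr ⟨k, rfl⟩)
  · exact absurd (by simp [Eyz, edgeMon_apply]) hx

lemma cover_y {g : LV a b c → ℕ} (hg : g ∈ edgeGens (LGraph a b c))
    (hy : g (Sum.inl 1) ≠ 0) :
    g = Exy a b c ∨ (∃ j, g = Eyy a b c j) ∨ (∃ k, g = Eyz a b c k) := by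
  rcases mem_cases hg with rfl | ⟨i, rfl⟩ | ⟨j, rfl⟩ | ⟨k, rfl⟩ | ⟨k, rfl⟩
  · exact Or.inl rfl
  · exact absurd (by simp [Exx, edgeMon_apply]) hy
  · exact Or.inr (Or.inl ⟨j, rfl⟩)
  · exact absurd (by simp [Exz, edgeMon_apply]) hy
  · exact Or.inr (Or.inr ⟨k, rfl⟩)

lemma cover_xi {g : LV a b c → ℕ} (hg : g ∈ edgeGens (LGraph a b c)) {i : Fin a}
    (hx : g (Sum.inr (Sum.inl i)) ≠ 0) : g = Exx a b c i := by
  rcases mem_cases hg with rfl | ⟨i', rfl⟩ | ⟨j, rfl⟩ | ⟨k, rfl⟩ | ⟨k, rfl⟩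
  · exact absurd (by simp [Exy, edgeMon_apply]) hx
  · have : i = i' := by
      by_contra hne
      exact hx (by simp [Exx, edgeMon_apply, hne])
    rw [this]
  · exact absurd (by simp [Eyy, edgeMon_apply]) hx
  · exact absurd (by simp [Exz, edgeMon_apply]) hx
  · exact absurd (by simp [Eyz, edgeMon_apply]) hx

lemma cover_yj {g : LV a b c → ℕ} (hg : g ∈ edgeGens (LGraph a b c)) {j : Fin b}
    (hy : g (Sum.inr (Sum.inr (Sum.inl j))) ≠ 0) : g = Eyy a b c j := by
  rcases mem_cases hg with rfl | ⟨i, rfl⟩ | ⟨j', rfl⟩ | ⟨k, rfl⟩ | ⟨k, rfl⟩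
  · exact absurd (by simp [Exy, edgeMon_apply]) hy
  · exact absurd (by simp [Exx, edgeMon_apply]) hy
  · have : j = j' := by
      by_contra hne
      exact hy (by simp [Eyy, edgeMon_apply, hne])
    rw [this]
  · exact absurd (by simp [Exz, edgeMon_apply]) hy
  · exact absurd (by simp [Eyz, edgeMon_apply]) hy

lemma cover_zk {g : LV a b c → ℕ} (hg : g ∈ edgeGens (LGraph a b c)) {k : Fin c}
    (hz : g (Sum.inr (Sum.inr (Sum.inr k))) ≠ 0) :
    g = Exz a b c k ∨ g = Eyz a b c k := by
  rcases mem_cases hg with rfl | ⟨i, rfl⟩ | ⟨j, rfl⟩ | ⟨k', rfl⟩ | ⟨k', rfl⟩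
  · exact absurd (by simp [Exy, edgeMon_apply]) hz
  · exact absurd (by simp [Exx, edgeMon_apply]) hz
  · exact absurd (by simp [Eyy, edgeMon_apply]) hz
  · have : k = k' := by
      by_contra hne
      exact hz (by simp [Exz, edgeMon_apply, hne])
    exact Or.inl (by rw [this])
  · have : k = k' := by
      by_contra hne
      exact hz (by simp [Eyz, edgeMon_apply, hne])
    exact Or.inr (by rw [this])

end Aux2
lemma ordL_injOn {a b c : ℕ} : Set.InjOn (ordL a b c) (edgeGens (LGraph a b c)) := by
  intro m hm m' hm' h
  rcases mem_cases hm with rfl | ⟨i, rfl⟩ | ⟨i, rfl⟩ | ⟨i, rfl⟩ | ⟨i, rfl⟩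
  · rcases mem_cases hm' with rfl | ⟨i', rfl⟩ | ⟨i', rfl⟩ | ⟨i', rfl⟩ | ⟨i', rfl⟩
    · rfl
    · exfalso
      simp only [ord_Exy, ord_Exx] at h
      have hb2 := i'.isLt
      omega
    · exfalso
      simp only [ord_Exy, ord_Eyy] at h
      have hb2 := i'.isLt
      omega
    · exfalso
      simp only [ord_Exy, ord_Exz] at h
      have hb2 := i'.isLt
      omega
    · exfalso
      simp only [ord_Exy, ord_Eyz] at h
      have hb2 := i'.isLt
      omega
  · rcases mem_cases hm' with rfl | ⟨i', rfl⟩ | ⟨i', rfl⟩ | ⟨i', rfl⟩ | ⟨i', rfl⟩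
    · exfalso
      simp only [ord_Exx, ord_Exy] at h
      have hb1 := i.isLt
      omega
    · simp only [ord_Exx] at h
      have hb1 := i.isLt; have hb2 := i'.isLt
      have : i = i' := Fin.ext (by omega)
      rw [this]
    · exfalso
      simp only [ord_Exx, ord_Eyy] at h
      have hb1 := i.isLt; have hb2 := i'.isLt
      omega
    · exfalso
      simp only [ord_Exx, ord_Exz] at h
      have hb1 := i.isLt; have hb2 := i'.isLt
      omega
    · exfalso
      simp only [ord_Exx, ord_Eyz] at h
      have hb1 := i.isLt; have hb2 := i'.isLt
      omega
  · rcases mem_cases hm' with rfl | ⟨i', rfl⟩ | ⟨i', rfl⟩ | ⟨i', rfl⟩ | ⟨i', rfl⟩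
    · exfalso
      simp only [ord_Eyy, ord_Exy] at h
      have hb1 := i.isLt
      omega
    · exfalso
      simp only [ord_Eyy, ord_Exx] at h
      have hb1 := i.isLt; have hb2 := i'.isLt
      omega
    · simp only [ord_Eyy] at h
      have hb1 := i.isLt; have hb2 := i'.isLt
      have : i = i' := Fin.ext (by omega)
      rw [this]
    · exfalso
      simp only [ord_Eyy, ord_Exz] at h
      have hb1 := i.isLt; have hb2 := i'.isLt
      omega
    · exfalso
      simp only [ord_Eyy, ord_Eyz] at h
      have hb1 := i.isLt; have hb2 := i'.isLt
      omega
  · rcases mem_cases hm' with rfl | ⟨i', rfl⟩ | ⟨i', rfl⟩ | ⟨i', rfl⟩ | ⟨i', rfl⟩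
    · exfalso
      simp only [ord_Exz, ord_Exy] at h
      have hb1 := i.isLt
      omega
    · exfalso
      simp only [ord_Exz, ord_Exx] at h
      have hb1 := i.isLt; have hb2 := i'.isLt
      omega
    · exfalso
      simp only [ord_Exz, ord_Eyy] at h
      have hb1 := i.isLt; have hb2 := i'.isLt
      omega
    · simp only [ord_Exz] at h
      have hb1 := i.isLt; have hb2 := i'.isLt
      have : i = i' := Fin.ext (by omega)
      rw [this]
    · exfalso
      simp only [ord_Exz, ord_Eyz] at h
      have hb1 := i.isLt; have hb2 := i'.isLt
      omega
  · rcases mem_cases hm' with rfl | ⟨i', rfl⟩ | ⟨i', rfl⟩ | ⟨i', rfl⟩ | ⟨i', rfl⟩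
    · exfalso
      simp only [ord_Eyz, ord_Exy] at h
      have hb1 := i.isLt
      omega
    · exfalso
      simp only [ord_Eyz, ord_Exx] at h
      have hb1 := i.isLt; have hb2 := i'.isLt
      omega
    · exfalso
      simp only [ord_Eyz, ord_Eyy] at h
      have hb1 := i.isLt; have hb2 := i'.isLt
      omega
    · exfalso
      simp only [ord_Eyz, ord_Exz] at h
      have hb1 := i.isLt; have hb2 := i'.isLt
      omega
    · simp only [ord_Eyz] at h
      have hb1 := i.isLt; have hb2 := i'.isLt
      have : i = i' := Fin.ext (by omega)
      rw [this]
section Aux4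
variable {a b c : ℕ}

lemma exists_cover {σ : Finset (LV a b c → ℕ)} {m : LV a b c → ℕ} (hb : IsBridge σ m)
    (v : LV a b c) (hv : m v ≠ 0) : ∃ g ∈ σ, g ≠ m ∧ g v ≠ 0 := by
  have h2 := congrFun hb.2 v
  have h1 : m v ≤ mlcm σ v := Finset.le_sup (f := fun g => g v) hb.1
  have h3 := le_trans (le_trans (Nat.one_le_iff_ne_zero.mpr hv) h1) h2.symm.le
  simp only [mlcm] at h3
  obtain ⟨g, hg, hgv⟩ := (Finset.le_sup_iff (by norm_num : (0:ℕ) < 1)).mp h3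
  refine ⟨g, @Finset.mem_of_mem_erase _ (fun a b => Classical.propDecidable (a = b)) _ _ _ hg,
    @Finset.ne_of_mem_erase _ (fun a b => Classical.propDecidable (a = b)) _ _ _ hg, ?_⟩
  exact Nat.one_le_iff_ne_zero.mp hgv

/-- The key violation: two elements of `σ` covering `x` and `y`, with distinct orders
both above `ord (xy)`, violate Lyubeznik-criticality. -/
lemma violateXY {σ : Finset (LV a b c → ℕ)} {g₁ g₂ : LV a b c → ℕ}
    (h1 : g₁ ∈ σ) (h2 : g₂ ∈ σ)
    (hx : g₁ (Sum.inl 0) ≠ 0) (hy : g₂ (Sum.inl 1) ≠ 0)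
    (hW1 : a + b + c + 1 < ordL a b c g₁) (hW2 : a + b + c + 1 < ordL a b c g₂)
    (hne : ordL a b c g₁ ≠ ordL a b c g₂) :
    ∃ m ∈ edgeGens (LGraph a b c), ∃ t ∈ σ,
      (∃ u ∈ σ, ordL a b c t < ordL a b c u) ∧ ordL a b c m < ordL a b c t ∧
        ∀ v, m v ≤ mlcm (σ.filter fun g => ordL a b c t ≤ ordL a b c g) v := by
  have hdvd : ∀ t : LV a b c → ℕ, ordL a b c t ≤ ordL a b c g₁ →
      ordL a b c t ≤ ordL a b c g₂ →
      ∀ v, Exy a b c v ≤ mlcm (σ.filter fun g => ordL a b c t ≤ ordL a b c g) v := by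
    intro t ht1 ht2 v
    by_cases hvx : v = Sum.inl 0
    · subst hvx
      have hmem : g₁ ∈ σ.filter fun g => ordL a b c t ≤ ordL a b c g :=
        Finset.mem_filter.mpr ⟨h1, ht1⟩
      have hsup := Finset.le_sup (f := fun g => g (Sum.inl (0 : Fin 2))) hmem
      have hle : 1 ≤ g₁ (Sum.inl 0) := Nat.one_le_iff_ne_zero.mpr hx
      calc Exy a b c (Sum.inl 0) = 1 := by simp [Exy, edgeMon_apply]
        _ ≤ _ := le_trans hle hsup
    · by_cases hvy : v = Sum.inl 1
      · subst hvy
        have hmem : g₂ ∈ σ.filter fun g => ordL a b c t ≤ ordL a b c g :=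
          Finset.mem_filter.mpr ⟨h2, ht2⟩
        have hsup := Finset.le_sup (f := fun g => g (Sum.inl (1 : Fin 2))) hmem
        have hle : 1 ≤ g₂ (Sum.inl 1) := Nat.one_le_iff_ne_zero.mpr hy
        calc Exy a b c (Sum.inl 1) = 1 := by simp [Exy, edgeMon_apply]
          _ ≤ _ := le_trans hle hsup
      · have hz : Exy a b c v = 0 := by
          rw [Exy, edgeMon_apply]
          simp [hvx, hvy]
        rw [hz]; exact Nat.zero_le _
  rcases lt_or_gt_of_ne hne with hlt | hlt
  · exact ⟨Exy a b c, Exy_mem a b c, g₁, h1, ⟨g₂, h2, hlt⟩, by rw [ord_Exy]; exact hW1,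
      hdvd g₁ le_rfl (le_of_lt hlt)⟩
  · exact ⟨Exy a b c, Exy_mem a b c, g₂, h2, ⟨g₁, h1, hlt⟩, by rw [ord_Exy]; exact hW2,
      hdvd g₂ (le_of_lt hlt) le_rfl⟩

lemma no_bridge (σ : Finset (LV a b c → ℕ))
    (hcrit : LyubCritical (edgeGens (LGraph a b c)) (ordL a b c) σ) (m : LV a b c → ℕ) :
    ¬ IsBridge σ m := by
  obtain ⟨hs, hne⟩ := hcrit
  intro hb
  have hmσ := hb.1
  rcases mem_cases (hs hmσ) with rfl | ⟨i, rfl⟩ | ⟨j, rfl⟩ | ⟨k, rfl⟩ | ⟨k, rfl⟩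
  · -- m = Exy
    obtain ⟨g₁, hg1σ, hg1ne, hg1x⟩ :=
      exists_cover hb (Sum.inl 0) (by simp [Exy, edgeMon_apply])
    obtain ⟨g₂, hg2σ, hg2ne, hg2y⟩ :=
      exists_cover hb (Sum.inl 1) (by simp [Exy, edgeMon_apply])
    rcases cover_x (hs hg1σ) hg1x with h1 | ⟨i, rfl⟩ | ⟨k, rfl⟩
    · exact hg1ne h1
    · rcases cover_y (hs hg2σ) hg2y with h2 | ⟨j, rfl⟩ | ⟨k', rfl⟩
      · exact hg2ne h2
      · refine hne (violateXY hg1σ hg2σ hg1x hg2y ?_ ?_ ?_)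
        · rw [ord_Exx]; omega
        · rw [ord_Eyy]; omega
        · rw [ord_Exx, ord_Eyy]; have := i.isLt; have := j.isLt; omega
      · refine hne (violateXY hg1σ hg2σ hg1x hg2y ?_ ?_ ?_)
        · rw [ord_Exx]; omega
        · rw [ord_Eyz]; omega
        · rw [ord_Exx, ord_Eyz]; have := i.isLt; have := k'.isLt; omega
    · rcases cover_y (hs hg2σ) hg2y with h2 | ⟨j, rfl⟩ | ⟨k', rfl⟩
      · exact hg2ne h2
      · refine hne (violateXY hg1σ hg2σ hg1x hg2y ?_ ?_ ?_)
        · rw [ord_Exz]; omega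
        · rw [ord_Eyy]; omega
        · rw [ord_Exz, ord_Eyy]; have := k.isLt; have := j.isLt; omega
      · refine hne (violateXY hg1σ hg2σ hg1x hg2y ?_ ?_ ?_)
        · rw [ord_Exz]; omega
        · rw [ord_Eyz]; omega
        · rw [ord_Exz, ord_Eyz]; have := k.isLt; have := k'.isLt; omega
  · -- m = Exx i : leaf
    obtain ⟨g, hgσ, hgne, hgv⟩ :=
      exists_cover hb (Sum.inr (Sum.inl i)) (by simp [Exx, edgeMon_apply])
    exact hgne (cover_xi (hs hgσ) hgv)
  · -- m = Eyy j : leaf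
    obtain ⟨g, hgσ, hgne, hgv⟩ :=
      exists_cover hb (Sum.inr (Sum.inr (Sum.inl j))) (by simp [Eyy, edgeMon_apply])
    exact hgne (cover_yj (hs hgσ) hgv)
  · -- m = Exz k
    obtain ⟨g, hgσ, hgne, hgv⟩ :=
      exists_cover hb (Sum.inr (Sum.inr (Sum.inr k))) (by simp [Exz, edgeMon_apply])
    rcases cover_zk (hs hgσ) hgv with h1 | rfl
    · exact hgne h1
    · refine hne (violateXY hmσ hgσ (by simp [Exz, edgeMon_apply])
        (by simp [Eyz, edgeMon_apply]) ?_ ?_ ?_)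
      · rw [ord_Exz]; omega
      · rw [ord_Eyz]; omega
      · rw [ord_Exz, ord_Eyz]; have := k.isLt; omega
  · -- m = Eyz k
    obtain ⟨g, hgσ, hgne, hgv⟩ :=
      exists_cover hb (Sum.inr (Sum.inr (Sum.inr k))) (by simp [Eyz, edgeMon_apply])
    rcases cover_zk (hs hgσ) hgv with rfl | h1
    · refine hne (violateXY hgσ hmσ (by simp [Exz, edgeMon_apply])
        (by simp [Eyz, edgeMon_apply]) ?_ ?_ ?_)
      · rw [ord_Exz]; omega
      · rw [ord_Eyz]; omega
      · rw [ord_Exz, ord_Eyz]; have := k.isLt; omega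
    · exact hgne h1

end Aux4
/-- **Proposition 3.6.** The edge ideal of `L(a,b,c)` is Lyubeznik; moreover, when
`a ≥ 1` or `c ≥ 1`, the explicit total order
`yy_b ≻ ⋯ ≻ yy_1 ≻ xx_a ≻ ⋯ ≻ xx_1 ≻ yz_c ≻ ⋯ ≻ yz_1 ≻ xz_c ≻ ⋯ ≻ xz_1 ≻ xy`
(encoded by `ordL`) yields a minimal Lyubeznik resolution, i.e. no Lyubeznik-critical
subset has a bridge. -/
theorem LGraph_isLyubeznik (a b c : ℕ) :
    IsLyubeznik (edgeGens (LGraph a b c)) ∧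
    (1 ≤ a ∨ 1 ≤ c →
      Set.InjOn (ordL a b c) (edgeGens (LGraph a b c)) ∧
      ∀ σ : Finset (LV a b c → ℕ),
        LyubCritical (edgeGens (LGraph a b c)) (ordL a b c) σ → ∀ m, ¬ IsBridge σ m) := by
  exact ⟨⟨ordL a b c, ordL_injOn, fun σ hσ m => no_bridge σ hσ m⟩,
    fun _ => ⟨ordL_injOn, fun σ hσ m => no_bridge σ hσ m⟩⟩

end ChauHaMaithani
end
end

section
/- A finite connected simple graph G is isomorphic to BF(T,w) for some finite tree T and edge-weight function w : E(T) → ℕ if and only if G is chordal and every induced 3-cycle (triangle) of G contains a vertex whose degree in G equals 2. -/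
open scoped Classical

noncomputable section

namespace ChauHaMaithani

variable {V : Type*}

section Helpers
open SimpleGraph

variable {W : Type*} {H : SimpleGraph W}


lemma getVert_mem_support {u v : W} (p : H.Walk u v) (i : ℕ) : p.getVert i ∈ p.support := by
  induction p generalizing i with
  | nil => simp [SimpleGraph.Walk.getVert]
  | cons h q ih =>
    cases i with
    | zero => simp [SimpleGraph.Walk.getVert]
    | succ n => simp only [Walk.getVert_cons_succ, Walk.support_cons, List.mem_cons]; exact Or.inr (ih n)

lemma IsPath.getVert_injOn' {u v : W} {p : H.Walk u v} (hp : p.IsPath) :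
    ∀ i ≤ p.length, ∀ j ≤ p.length, p.getVert i = p.getVert j → i = j := by
  induction p with
  | nil => intro i hi j hj _; simp only [Walk.length_nil, Nat.le_zero] at hi hj; omega
  | cons h q ih =>
    intro i hi j hj hij
    have hsup := hp.support_nodup
    rw [Walk.support_cons, List.nodup_cons] at hsup
    have hq : q.IsPath := (Walk.cons_isPath_iff _ _).mp hp |>.1
    match i, j with
    | 0, 0 => rfl
    | 0, (j+1) =>
      exfalso
      rw [Walk.getVert_zero, Walk.getVert_cons_succ] at hij
      exact ((Walk.cons_isPath_iff _ _).mp hp).2 (hij ▸ getVert_mem_support q j)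
    | (i+1), 0 =>
      exfalso
      rw [Walk.getVert_zero, Walk.getVert_cons_succ] at hij
      exact ((Walk.cons_isPath_iff _ _).mp hp).2 (hij ▸ getVert_mem_support q i)
    | (i+1), (j+1) =>
      simp only [Walk.getVert_cons_succ] at hij
      have := ih hq i (by simpa [Walk.length_cons] using hi) j (by simpa [Walk.length_cons] using hj) hij
      omega

/-- chain reachability -/
lemma reachable_chain (f : ℕ → W) (a b : ℕ) (hab : a ≤ b)
    (hadj : ∀ i, a ≤ i → i < b → H.Adj (f i) (f (i+1))) : H.Reachable (f a) (f b) := by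
  induction b with
  | zero =>
    have : a = 0 := by omega
    subst this; exact Reachable.refl _
  | succ n ih =>
    rcases Nat.eq_or_lt_of_le hab with h | h
    · exact h ▸ Reachable.refl _
    · have h1 : a ≤ n := by omega
      exact (ih h1 (fun i h2 h3 => hadj i h2 (by omega))).trans (hadj n h1 (by omega)).reachable



open Fin.NatCast Fin.CommRing in
lemma cycleEmb_not_acyclic {m : ℕ} (hm : 1 ≤ m) (f : cycleGraph (m+2) ↪g H) :
    ¬ H.IsAcyclic := by
  intro hac
  have hcadj : ∀ i : ℕ, (cycleGraph (m+2)).Adj (↑i) (↑(i+1)) := by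
    intro i
    rw [cycleGraph_adj]
    right
    push_cast
    ring
  have hFinj : ∀ i j : ℕ, i < m + 2 → j < m + 2 → f (↑i) = f (↑j) → i = j := by
    intro i j hi hj h
    have := f.injective h
    have := congrArg Fin.val this
    rwa [Fin.val_cast_of_lt hi, Fin.val_cast_of_lt hj] at this
  set F : ℕ → W := fun i => f (↑i : Fin (m+2)) with hF
  have hadjF : ∀ i : ℕ, H.Adj (F i) (F (i+1)) := fun i => f.map_adj_iff.mpr (hcadj i)
  have hbridge := (isAcyclic_iff_forall_adj_isBridge.mp hac) (hadjF 0)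
  rw [isBridge_iff] at hbridge
  apply hbridge
  have hwrap : F (m+2) = F 0 := by simp [hF]
  have hreach : (H \ fromEdgeSet {s(F 0, F 1)}).Reachable (F 1) (F (m+2)) := by
    apply reachable_chain (H := H \ fromEdgeSet {s(F 0, F 1)}) F 1 (m+2) (by omega)
    intro i h1 h2
    rw [sdiff_adj]
    refine ⟨hadjF i, ?_⟩
    rw [fromEdgeSet_adj]
    rintro ⟨he, -⟩
    rw [Set.mem_singleton_iff, Sym2.eq_iff] at he
    rcases he with ⟨h3, h4⟩ | ⟨h3, h4⟩
    · exact absurd (hFinj i 0 (by omega) (by omega) h3) (by omega)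
    · have hi1 : i = 1 := hFinj i 1 (by omega) (by omega) h3
      subst hi1
      have : (2 : ℕ) = 0 := hFinj 2 0 (by omega) (by omega) h4
      omega
  rw [hwrap] at hreach
  exact (hreach.symm : _)

lemma not_acyclic_of_triangle {x y z : W} (hxy : H.Adj x y) (hyz : H.Adj y z)
    (hxz : H.Adj x z) : ¬ H.IsAcyclic := by
  have hinj : Function.Injective (fun i : Fin 3 => if i = 0 then x else if i = 1 then y else z) := by
    intro a b hab
    fin_cases a <;> fin_cases b <;> simp_all <;>
      first
        | rfl
        | exact absurd hab hxy.ne | exact absurd hab hxy.ne'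
        | exact absurd hab hyz.ne | exact absurd hab hyz.ne'
        | exact absurd hab hxz.ne | exact absurd hab hxz.ne'
  refine cycleEmb_not_acyclic (le_refl 1) ⟨⟨_, hinj⟩, ?_⟩
  intro a b
  simp only [Function.Embedding.coeFn_mk]
  constructor
  · intro h
    have hne : a ≠ b := by rintro rfl; exact H.loopless.irrefl _ h
    show (cycleGraph 3).Adj a b
    rw [cycleGraph_three_eq_top, top_adj]
    exact hne
  · intro h
    have hne : a ≠ b := by
      have h' : (cycleGraph 3).Adj a b := h
      rwa [cycleGraph_three_eq_top, top_adj] at h'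
    fin_cases a <;> fin_cases b <;> simp_all <;>
      first
        | exact hxy | exact hxy.symm | exact hyz | exact hyz.symm
        | exact hxz | exact hxz.symm



lemma edist_getVert_le {u v : W} (p : H.Walk u v) (i : ℕ) :
    H.edist u (p.getVert i) ≤ i := by
  induction p generalizing i with
  | nil => simp [SimpleGraph.Walk.getVert]
  | @cons a b c h q ih =>
    cases i with
    | zero => simp [SimpleGraph.Walk.getVert]
    | succ n =>
      rw [Walk.getVert_cons_succ]
      calc H.edist a (q.getVert n) ≤ H.edist a b + H.edist b (q.getVert n) :=
            SimpleGraph.edist_triangle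
        _ ≤ 1 + n :=
            add_le_add (SimpleGraph.edist_le (Walk.cons h Walk.nil) |>.trans (by simp)) (ih n)
        _ = (n+1 : ℕ) := by push_cast; ring

lemma edist_getVert_le' {u v : W} (p : H.Walk u v) (j : ℕ) (hj : j ≤ p.length) :
    H.edist (p.getVert j) v ≤ p.length - j := by
  have h := edist_getVert_le p.reverse (p.length - j)
  rw [Walk.getVert_reverse] at h
  have : p.length - (p.length - j) = j := by omega
  rw [this] at h
  rw [SimpleGraph.edist_comm]
  exact h

lemma geodesic_no_chord {x y : W} (p : H.Walk x y) (hp : (p.length : ℕ∞) = H.edist x y)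
    {i j : ℕ} (hij : i + 2 ≤ j) (hj : j ≤ p.length)
    (hadj : H.Adj (p.getVert i) (p.getVert j)) : False := by
  have h1 : H.edist x (p.getVert i) ≤ i := edist_getVert_le p i
  have h2 : H.edist (p.getVert i) (p.getVert j) ≤ 1 :=
    SimpleGraph.edist_le (Walk.cons hadj Walk.nil) |>.trans (by simp)
  have h3 : H.edist (p.getVert j) y ≤ (p.length - j : ℕ) := edist_getVert_le' p j hj
  have hle : H.edist x y ≤ (i : ℕ∞) + 1 + (p.length - j : ℕ) := by
    calc H.edist x y ≤ H.edist x (p.getVert j) + H.edist (p.getVert j) y :=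
          SimpleGraph.edist_triangle
      _ ≤ (H.edist x (p.getVert i) + H.edist (p.getVert i) (p.getVert j)) + H.edist (p.getVert j) y :=
          add_le_add_left SimpleGraph.edist_triangle _
      _ ≤ ((i : ℕ∞) + 1) + (p.length - j : ℕ) := add_le_add (add_le_add h1 h2) h3
  rw [← hp] at hle
  have : (p.length : ℕ∞) ≤ ((i + 1 + (p.length - j) : ℕ) : ℕ∞) := by
    refine hle.trans ?_
    push_cast
    ring_nf
    exact le_refl _
  rw [Nat.cast_le] at this
  omega

noncomputable def embOfGeodesic {x y : W} (hadj : H.Adj x y)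
    (p : (H \ fromEdgeSet {s(x,y)}).Walk x y)
    (hp : (p.length : ℕ∞) = (H \ fromEdgeSet {s(x,y)}).edist x y) (hpath : p.IsPath) {k : ℕ}
    (hlen : p.length = k + 3) : cycleGraph (k+4) ↪g H := by
  have hle : ∀ {u v : W}, (H \ fromEdgeSet {s(x,y)}).Adj u v → H.Adj u v :=
    fun h => ((sdiff_adj _ _ _ _).mp h).1
  have hinj : ∀ i ≤ p.length, ∀ j ≤ p.length, p.getVert i = p.getVert j → i = j :=
    IsPath.getVert_injOn' hpath
  set f : Fin (k+4) → W := fun a => p.getVert a.val with hf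
  have hb : ∀ a : Fin (k+4), a.val ≤ p.length := by
    intro a; have := a.isLt; omega
  have hfinj : Function.Injective f := by
    intro a b hab
    exact Fin.ext (hinj a.val (hb a) b.val (hb b) hab)
  have hgv0 : p.getVert 0 = x := p.getVert_zero
  have hgvm : p.getVert (k+3) = y := by rw [← hlen]; exact p.getVert_length
  have hstep : ∀ a b : Fin (k+4), b - a = 1 → H.Adj (f a) (f b) := by
    intro a b hba
    rw [sub_eq_iff_eq_add] at hba
    have hbv : b.val = (1 + a.val) % (k + 4) := by
      rw [hba, Fin.val_add, Fin.val_one]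
    rcases Nat.lt_or_ge a.val (k+3) with hav | hav
    · have hbv' : b.val = a.val + 1 := by
        rw [Nat.mod_eq_of_lt (by omega)] at hbv; omega
      have hstep2 := p.adj_getVert_succ (by omega : a.val < p.length)
      show H.Adj (p.getVert a.val) (p.getVert b.val)
      rw [hbv']
      exact hle hstep2
    · have hav' : a.val = k + 3 := by have := a.isLt; omega
      have hbv' : b.val = 0 := by
        rw [hav', show 1 + (k+3) = k+4 from by omega, Nat.mod_self] at hbv; exact hbv
      show H.Adj (p.getVert a.val) (p.getVert b.val)
      rw [hav', hbv', hgv0, hgvm]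
      exact hadj.symm
  refine ⟨⟨f, hfinj⟩, ?_⟩
  intro a b
  show H.Adj (f a) (f b) ↔ (cycleGraph (k+2+2)).Adj a b
  rw [cycleGraph_adj]
  constructor
  · intro h
    have hne : a.val ≠ b.val := fun hc => H.loopless.irrefl _ (by
      have : a = b := Fin.ext hc
      exact this ▸ h)
    by_cases hexy : s(f a, f b) = s(x, y)
    · rw [Sym2.eq_iff] at hexy
      rcases hexy with ⟨h1, h2⟩ | ⟨h1, h2⟩
      · -- f a = x, f b = y : a = 0, b = k+3, a - b = 1
        have hav : a.val = 0 := hinj a.val (hb a) 0 (by omega) (by rw [hgv0]; exact h1)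
        have hbv : b.val = k + 3 := hinj b.val (hb b) (k+3) (by omega) (by rw [hgvm]; exact h2)
        left
        rw [sub_eq_iff_eq_add]
        apply Fin.ext
        rw [Fin.val_add, Fin.val_one, hav, hbv,
          show 1 + (k+3) = k + 4 from by omega, Nat.mod_self]
      · -- f a = y, f b = x : b - a = 1
        have hav : a.val = k + 3 := hinj a.val (hb a) (k+3) (by omega) (by rw [hgvm]; exact h1)
        have hbv : b.val = 0 := hinj b.val (hb b) 0 (by omega) (by rw [hgv0]; exact h2)
        right
        rw [sub_eq_iff_eq_add]
        apply Fin.ext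
        rw [Fin.val_add, Fin.val_one, hbv, hav,
          show 1 + (k+3) = k + 4 from by omega, Nat.mod_self]
    · have hH'adj : (H \ fromEdgeSet {s(x,y)}).Adj (f a) (f b) := by
        rw [sdiff_adj]
        refine ⟨h, ?_⟩
        rw [fromEdgeSet_adj]
        rintro ⟨hmem, -⟩
        exact hexy (Set.mem_singleton_iff.mp hmem)
      have hc1 : ¬ (a.val + 2 ≤ b.val) := fun hc =>
        geodesic_no_chord p hp hc (hb b) hH'adj
      have hc2 : ¬ (b.val + 2 ≤ a.val) := fun hc =>
        geodesic_no_chord p hp hc (hb a) hH'adj.symm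
      rcases (by omega : b.val = a.val + 1 ∨ a.val = b.val + 1) with hcase | hcase
      · right
        rw [sub_eq_iff_eq_add]
        apply Fin.ext
        have hblt := b.isLt
        rw [Fin.val_add, Fin.val_one, hcase, Nat.mod_eq_of_lt (by omega)]
        omega
      · left
        rw [sub_eq_iff_eq_add]
        apply Fin.ext
        have halt := a.isLt
        rw [Fin.val_add, Fin.val_one, hcase, Nat.mod_eq_of_lt (by omega)]
        omega
  · rintro (h1 | h1)
    · exact (hstep b a h1).symm
    · exact hstep a b h1

lemma acyclic_of_chordal_trianglefree
    (hchord : ∀ n, 4 ≤ n → IsEmpty (cycleGraph n ↪g H))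
    (htri : ∀ x y z : W, H.Adj x y → H.Adj y z → H.Adj x z → False) : H.IsAcyclic := by
  rw [isAcyclic_iff_forall_adj_isBridge]
  intro x y hadj
  by_contra hnb
  rw [isBridge_iff] at hnb
  push_neg at hnb
  have hreach : (H \ fromEdgeSet {s(x,y)}).Reachable x y := hnb
  have hle : ∀ {u v : W}, (H \ fromEdgeSet {s(x,y)}).Adj u v → H.Adj u v :=
    fun h => ((sdiff_adj _ _ _ _).mp h).1
  obtain ⟨p, hp⟩ := hreach.exists_walk_length_eq_dist
  have hppath : p.IsPath := p.isPath_of_length_eq_dist hp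
  have hedist : (p.length : ℕ∞) = (H \ fromEdgeSet {s(x,y)}).edist x y := by
    have hne : (H \ fromEdgeSet {s(x,y)}).edist x y ≠ ⊤ := by
      rw [edist_ne_top_iff_reachable]; exact hreach
    rw [hp, SimpleGraph.dist]
    exact (ENat.coe_toNat hne).symm |>.symm
  have hm0 : p.length ≠ 0 := by
    intro h
    exact hadj.ne (p.eq_of_length_eq_zero h)
  have hm1 : p.length ≠ 1 := by
    intro h
    have h2 := p.adj_getVert_succ (by omega : 0 < p.length)
    rw [p.getVert_zero, show (0+1 : ℕ) = p.length by omega, p.getVert_length] at h2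
    rw [sdiff_adj] at h2
    exact h2.2 (by rw [fromEdgeSet_adj]; exact ⟨rfl, hadj.ne⟩)
  have hm2 : p.length ≠ 2 := by
    intro h
    have h2 := hle (p.adj_getVert_succ (by omega : 0 < p.length))
    have h3 := hle (p.adj_getVert_succ (by omega : 1 < p.length))
    rw [p.getVert_zero] at h2
    rw [show (1+1 : ℕ) = p.length by omega, p.getVert_length] at h3
    exact htri x (p.getVert 1) y h2 h3 hadj
  obtain ⟨k, hk⟩ : ∃ k, p.length = k + 3 := ⟨p.length - 3, by omega⟩
  exact (hchord (k+4) (by omega)).false (embOfGeodesic hadj p hedist hppath hk)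

variable {VT : Type} {T : SimpleGraph VT} {w : T.edgeSet → ℕ}

lemma BF_adj_inl_inl {a b : VT} : (BFGraph T w).Adj (Sum.inl a) (Sum.inl b) ↔ T.Adj a b := by
  rw [BFGraph, fromRel_adj]
  constructor
  · rintro ⟨hne, (⟨a', b', ha, hb, hadj⟩ | ⟨a', e, i, ha, hb, _⟩) |
      (⟨a', b', ha, hb, hadj⟩ | ⟨a', e, i, ha, hb, _⟩)⟩
    · simp only [Sum.inl.injEq] at ha hb; subst ha; subst hb; exact hadj
    · exact absurd hb (by simp)
    · simp only [Sum.inl.injEq] at ha hb; subst ha; subst hb; exact hadj.symm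
    · exact absurd hb (by simp)
  · intro h
    exact ⟨by simpa using h.ne, Or.inl (Or.inl ⟨a, b, rfl, rfl, h⟩)⟩

lemma BF_not_adj_inr_inr {p q : Σ e : T.edgeSet, Fin (w e)} :
    ¬ (BFGraph T w).Adj (Sum.inr p) (Sum.inr q) := by
  rw [BFGraph, fromRel_adj]
  rintro ⟨hne, (⟨a', b', ha, hb, _⟩ | ⟨a', e, i, ha, hb, _⟩) |
      (⟨a', b', ha, hb, _⟩ | ⟨a', e, i, ha, hb, _⟩)⟩ <;> simp_all

lemma BF_adj_inr {u : VT ⊕ (Σ e : T.edgeSet, Fin (w e))} {e : T.edgeSet} {i : Fin (w e)} :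
    (BFGraph T w).Adj u (Sum.inr ⟨e, i⟩) ↔ ∃ a : VT, u = Sum.inl a ∧ a ∈ (e : Sym2 VT) := by
  rw [BFGraph, fromRel_adj]
  constructor
  · rintro ⟨hne, (⟨a', b', ha, hb, _⟩ | ⟨a', e', i', ha, hb, hmem⟩) |
      (⟨a', b', ha, hb, _⟩ | ⟨a', e', i', ha, hb, hmem⟩)⟩
    · exact absurd hb (by simp)
    · rw [Sum.inr.injEq] at hb
      obtain ⟨he, -⟩ := Sigma.mk.inj_iff.mp hb.symm
      subst he
      exact ⟨a', ha, hmem⟩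
    · exact absurd ha (by simp)
    · exact absurd ha (by simp)
  · rintro ⟨a, rfl, hmem⟩
    exact ⟨by simp, Or.inl (Or.inr ⟨a, e, i, rfl, rfl, hmem⟩)⟩

lemma BF_nbrSet_inr (e : T.edgeSet) (i : Fin (w e)) :
    ((BFGraph T w).neighborSet (Sum.inr ⟨e, i⟩)).ncard = 2 := by
  obtain ⟨ed, he⟩ := e
  induction ed using Sym2.ind with
  | _ a b =>
    have hadj : T.Adj a b := (T.mem_edgeSet).mp he
    have hset : (BFGraph T w).neighborSet (Sum.inr ⟨⟨s(a,b), he⟩, i⟩) =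
        {Sum.inl a, Sum.inl b} := by
      ext u
      rw [mem_neighborSet, adj_comm, BF_adj_inr]
      constructor
      · rintro ⟨a', rfl, hmem⟩
        rcases Sym2.mem_iff.mp hmem with rfl | rfl <;> simp
      · rintro (rfl | rfl)
        · exact ⟨a, rfl, by simp⟩
        · exact ⟨b, rfl, by simp⟩
    rw [hset]
    exact Set.ncard_pair (by simpa using hadj.ne)

open Fin.NatCast Fin.CommRing in
lemma BF_no_cycleEmb (hT : T.IsAcyclic) (n : ℕ) (hn : 4 ≤ n) :
    IsEmpty (cycleGraph n ↪g BFGraph T w) := by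
  obtain ⟨k, rfl⟩ : ∃ k, n = k + 4 := ⟨n - 4, by omega⟩
  constructor
  intro f
  have hcadj : ∀ i j : Fin (k+4), j - i = 1 → (cycleGraph (k+4)).Adj i j := by
    intro i j hij
    have : (cycleGraph (k+2+2)).Adj i j := by
      rw [cycleGraph_adj]; right; exact hij
    exact this
  -- every vertex of the embedded cycle is a tree vertex
  have hinl : ∀ i : Fin (k+4), ∃ a : VT, f i = Sum.inl a := by
    intro i
    rcases hfi : f i with a | ⟨e, j⟩
    · exact ⟨a, rfl⟩
    exfalso
    have hval2 : ((2 : Fin (k+4)) : ℕ) = 2 := by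
      show (2 % (k+4) : ℕ) = 2; exact Nat.mod_eq_of_lt (by omega)
    have hval3 : ((3 : Fin (k+4)) : ℕ) = 3 := by
      show (3 % (k+4) : ℕ) = 3; exact Nat.mod_eq_of_lt (by omega)
    have h1 : (BFGraph T w).Adj (f (i+1)) (f i) :=
      (f.map_adj_iff.mpr (hcadj i (i+1) (by ring))).symm
    have h2 : (BFGraph T w).Adj (f (i-1)) (f i) :=
      f.map_adj_iff.mpr (hcadj (i-1) i (by ring))
    rw [hfi, BF_adj_inr] at h1 h2
    obtain ⟨a₁, ha₁, hm₁⟩ := h1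
    obtain ⟨a₂, ha₂, hm₂⟩ := h2
    have hne12 : (i+1 : Fin (k+4)) ≠ i - 1 := by
      intro hc
      have h0 : (2 : Fin (k+4)) = 0 := by linear_combination hc
      have := congrArg Fin.val h0
      rw [hval2] at this
      simp at this
    have hane : a₁ ≠ a₂ := by
      rintro rfl
      exact hne12 (f.injective (by rw [ha₁, ha₂]))
    have hedge : (e : Sym2 VT) = s(a₁, a₂) := ((Sym2.mem_and_mem_iff hane).mp ⟨hm₁, hm₂⟩)
    have hadj12 : T.Adj a₁ a₂ := by
      have := e.2
      rw [hedge] at this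
      exact T.mem_edgeSet.mp this
    have hbf : (BFGraph T w).Adj (f (i+1)) (f (i-1)) := by
      rw [ha₁, ha₂, BF_adj_inl_inl]; exact hadj12
    have hcyc := f.map_adj_iff.mp hbf
    have hcyc' : (cycleGraph (k+2+2)).Adj (i+1) (i-1) := hcyc
    rw [cycleGraph_adj] at hcyc'
    rcases hcyc' with hc | hc
    · have h0 : (1 : Fin (k+4)) = 0 := by linear_combination hc
      have := congrArg Fin.val h0
      rw [Fin.val_one] at this
      simp at this
    · have h0 : (3 : Fin (k+4)) = 0 := by linear_combination -hc
      have := congrArg Fin.val h0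
      rw [hval3] at this
      simp at this
  choose g hg using hinl
  have hginj : Function.Injective g := by
    intro a b hab
    apply f.injective
    rw [hg a, hg b, hab]
  have : cycleGraph (k+2+2) ↪g T := by
    refine ⟨⟨g, hginj⟩, ?_⟩
    intro a b
    show T.Adj (g a) (g b) ↔ _
    rw [← BF_adj_inl_inl (w := w), ← hg a, ← hg b]
    exact f.map_adj_iff
  exact cycleEmb_not_acyclic (by omega) this hT

lemma iso_ncard_nbr {α β : Type*} {G : SimpleGraph α} {H : SimpleGraph β} (φ : G ≃g H)
    (v : α) : (G.neighborSet v).ncard = (H.neighborSet (φ v)).ncard := by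
  rw [← Nat.card_coe_set_eq, ← Nat.card_coe_set_eq]
  exact Nat.card_congr (φ.mapNeighborSet v)

lemma forward_aux {V : Type} [Fintype V] {G : SimpleGraph V} (hT : T.IsTree)
    (φ : G ≃g BFGraph T w) :
    (∀ n, 4 ≤ n → IsEmpty (cycleGraph n ↪g G)) ∧
      ∀ x y z : V, G.Adj x y → G.Adj y z → G.Adj x z →
        (G.neighborSet x).ncard = 2 ∨ (G.neighborSet y).ncard = 2 ∨
          (G.neighborSet z).ncard = 2 := by
  constructor
  · intro n hn
    constructor
    intro f
    exact (BF_no_cycleEmb hT.2 n hn).false (φ.toEmbedding.comp f)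
  · intro x y z hxy hyz hxz
    have hbxy : (BFGraph T w).Adj (φ x) (φ y) := φ.map_adj_iff.mpr hxy
    have hbyz : (BFGraph T w).Adj (φ y) (φ z) := φ.map_adj_iff.mpr hyz
    have hbxz : (BFGraph T w).Adj (φ x) (φ z) := φ.map_adj_iff.mpr hxz
    rcases hpx : φ x with a | ⟨e, i⟩
    rotate_left
    · exact Or.inl (by rw [iso_ncard_nbr φ x, hpx]; exact BF_nbrSet_inr e i)
    rcases hpy : φ y with b | ⟨e, i⟩
    rotate_left
    · exact Or.inr (Or.inl (by rw [iso_ncard_nbr φ y, hpy]; exact BF_nbrSet_inr e i))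
    rcases hpz : φ z with c | ⟨e, i⟩
    rotate_left
    · exact Or.inr (Or.inr (by rw [iso_ncard_nbr φ z, hpz]; exact BF_nbrSet_inr e i))
    exfalso
    rw [hpx, hpy] at hbxy
    rw [hpy, hpz] at hbyz
    rw [hpx, hpz] at hbxz
    rw [BF_adj_inl_inl] at hbxy hbyz hbxz
    exact not_acyclic_of_triangle hbxy hbyz hbxz hT.2

theorem backward_aux {V : Type} [Fintype V] (G : SimpleGraph V) (hconn : G.Connected)
    (hchord : ∀ n, 4 ≤ n → IsEmpty (cycleGraph n ↪g G))
    (htri : ∀ x y z : V, G.Adj x y → G.Adj y z → G.Adj x z →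
        (G.neighborSet x).ncard = 2 ∨ (G.neighborSet y).ncard = 2 ∨
          (G.neighborSet z).ncard = 2) :
    ∃ (VT : Type) (_ : Fintype VT) (T : SimpleGraph VT) (_ : T.IsTree)
        (w : T.edgeSet → ℕ), Nonempty (G ≃g BFGraph T w) := by
  set ι : V → ℕ := fun v => (Fintype.equivFin V v : ℕ) with hι
  have hιinj : Function.Injective ι := fun a b h =>
    (Fintype.equivFin V).injective (Fin.ext h)
  set cand : V → Prop := fun v => ∃ x y, G.Adj x y ∧ G.neighborSet v = {x, y} with hcand
  set tip : V → Prop := fun v => cand v ∧ ∀ u, G.Adj v u → cand u → ι u < ι v with htip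
  -- if v has ncard-2 neighborhood and two distinct neighbors, the nbhd is exactly those two
  have hNbr : ∀ v y z : V, cand v → G.Adj v y → G.Adj v z → y ≠ z →
      G.neighborSet v = {y, z} := by
    intro v y z hc hy hz hyz
    obtain ⟨p, q, hpq, hN⟩ := hc
    have hsub : ({y, z} : Set V) ⊆ G.neighborSet v := by
      rintro u (rfl | rfl) <;> assumption
    have h2 : (G.neighborSet v).ncard ≤ ({y, z} : Set V).ncard := by
      rw [hN, Set.ncard_pair hpq.ne, Set.ncard_pair hyz]
    exact (Set.eq_of_subset_of_ncard_le hsub h2 (Set.toFinite _)).symm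
  have hcand_of_ncard : ∀ x y z : V, G.Adj x y → G.Adj x z → G.Adj y z →
      (G.neighborSet x).ncard = 2 → cand x := by
    intro x y z hxy hxz hyz hn
    refine ⟨y, z, hyz, ?_⟩
    have hsub : ({y, z} : Set V) ⊆ G.neighborSet x := by
      rintro u (rfl | rfl) <;> assumption
    exact (Set.eq_of_subset_of_ncard_le hsub
      (by rw [hn, Set.ncard_pair hyz.ne]) (Set.toFinite _)).symm
  -- every triangle contains a tip
  have htri_tip : ∀ x y z : V, G.Adj x y → G.Adj y z → G.Adj x z →
      tip x ∨ tip y ∨ tip z := by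
    intro x y z hxy hyz hxz
    have hCne : ∃ u, (u = x ∨ u = y ∨ u = z) ∧ cand u := by
      rcases htri x y z hxy hyz hxz with h | h | h
      · exact ⟨x, Or.inl rfl, hcand_of_ncard x y z hxy hxz hyz h⟩
      · exact ⟨y, Or.inr (Or.inl rfl), hcand_of_ncard y x z hxy.symm hyz hxz h⟩
      · exact ⟨z, Or.inr (Or.inr rfl), hcand_of_ncard z x y hxz.symm hyz.symm hxy h⟩
    set Cf : Finset V := Finset.univ.filter (fun u => (u = x ∨ u = y ∨ u = z) ∧ cand u)
      with hCf
    have hCfne : Cf.Nonempty := by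
      obtain ⟨u, h1, h2⟩ := hCne
      exact ⟨u, by simp [hCf, h1, h2]⟩
    obtain ⟨c, hcC, hcmax⟩ := Finset.exists_max_image Cf ι hCfne
    rw [hCf, Finset.mem_filter] at hcC
    obtain ⟨-, hcor, hccand⟩ := hcC
    have hctip : tip c := by
      refine ⟨hccand, ?_⟩
      intro u hadj hcandu
      have hne : u ≠ c := fun h => G.loopless.irrefl c (h ▸ hadj)
      have humem : u ∈ G.neighborSet c := hadj
      have hinC : u = x ∨ u = y ∨ u = z := by
        rcases hcor with rfl | rfl | rfl
        · rw [hNbr c y z hccand hxy hxz hyz.ne] at humem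
          rcases humem with rfl | rfl <;> simp
        · rw [hNbr c x z hccand hxy.symm hyz hxz.ne] at humem
          rcases humem with rfl | rfl <;> simp
        · rw [hNbr c x y hccand hxz.symm hyz.symm hxy.ne] at humem
          rcases humem with rfl | rfl <;> simp
      have : u ∈ Cf := by simp [hCf, hinC, hcandu]
      have hle := hcmax u this
      exact lt_of_le_of_ne hle (fun h => hne (hιinj h))
    rcases hcor with rfl | rfl | rfl
    · exact Or.inl hctip
    · exact Or.inr (Or.inl hctip)
    · exact Or.inr (Or.inr hctip)
  -- two tips are never adjacent
  have htips_not_adj : ∀ u v : V, tip u → tip v → G.Adj u v → False := by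
    intro u v hu hv hadj
    have h1 := hu.2 v hadj hv.1
    have h2 := hv.2 u hadj.symm hu.1
    omega
  -- choose the two neighbors of each tip
  have hex : ∀ v : V, ∃ x y : V, tip v → G.Adj x y ∧ G.neighborSet v = {x, y} := by
    intro v
    by_cases h : tip v
    · obtain ⟨x, y, hxy, hN⟩ := h.1
      exact ⟨x, y, fun _ => ⟨hxy, hN⟩⟩
    · exact ⟨v, v, fun hc => absurd hc h⟩
  choose n1 n2 hn12 using hex
  have hadj_n1 : ∀ v, tip v → G.Adj v (n1 v) := by
    intro v hv
    have := (hn12 v hv).2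
    have : n1 v ∈ G.neighborSet v := by rw [this]; simp
    exact this
  have hadj_n2 : ∀ v, tip v → G.Adj v (n2 v) := by
    intro v hv
    have := (hn12 v hv).2
    have : n2 v ∈ G.neighborSet v := by rw [this]; simp
    exact this
  have hn1nt : ∀ v, tip v → ¬ tip (n1 v) := fun v hv hc =>
    htips_not_adj v (n1 v) hv hc (hadj_n1 v hv)
  have hn2nt : ∀ v, tip v → ¬ tip (n2 v) := fun v hv hc =>
    htips_not_adj v (n2 v) hv hc (hadj_n2 v hv)
  set K : Set V := {v | ¬ tip v} with hK
  set T : SimpleGraph ↥K := G.induce K with hT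
  haveI : Fintype ↥K := Fintype.ofFinite _
  have hTadj : ∀ (a b : ↥K), T.Adj a b ↔ G.Adj a.1 b.1 := by
    intro a b
    rw [hT]
    exact comap_adj
  have hmemK : ∀ v, ¬ tip v → v ∈ K := fun v h => h
  -- the tree edge attached to a tip
  have hEmem : ∀ v (h : tip v),
      s((⟨n1 v, hmemK _ (hn1nt v h)⟩ : ↥K), (⟨n2 v, hmemK _ (hn2nt v h)⟩ : ↥K)) ∈
        T.edgeSet := by
    intro v h
    rw [mem_edgeSet, hTadj]
    exact (hn12 v h).1
  set E : ∀ v, tip v → T.edgeSet := fun v h =>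
    ⟨s(⟨n1 v, hmemK _ (hn1nt v h)⟩, ⟨n2 v, hmemK _ (hn2nt v h)⟩), hEmem v h⟩ with hE
  set Tipsf : T.edgeSet → Finset V := fun e =>
    Finset.univ.filter (fun v => tip v ∧ s(n1 v, n2 v) = Sym2.map Subtype.val e.1)
    with hTipsf
  set w : T.edgeSet → ℕ := fun e => (Tipsf e).card with hw
  set eqv : ∀ e : T.edgeSet, ↥(Tipsf e) ≃ Fin (w e) := fun e => (Tipsf e).equivFin
    with heqv
  have hv_in_Tips : ∀ v (h : tip v), v ∈ Tipsf (E v h) := by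
    intro v h
    rw [hTipsf]
    simp only [Finset.mem_filter, Finset.mem_univ, true_and]
    exact ⟨h, by simp [hE, Sym2.map_pair_eq]⟩
  -- the vertex bijection
  set φf : V → (↥K ⊕ Σ e : T.edgeSet, Fin (w e)) := fun v =>
    if h : tip v then Sum.inr ⟨E v h, eqv (E v h) ⟨v, hv_in_Tips v h⟩⟩
    else Sum.inl ⟨v, hmemK v h⟩ with hφf
  set φg : (↥K ⊕ Σ e : T.edgeSet, Fin (w e)) → V :=
    Sum.elim (fun k => k.1) (fun p => (((eqv p.1).symm p.2) : V)) with hφg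
  have hleft : Function.LeftInverse φg φf := by
    intro v
    by_cases h : tip v
    · rw [hφf]
      simp only [dif_pos h, hφg, Sum.elim_inr]
      rw [Equiv.symm_apply_apply]
    · rw [hφf]
      simp only [dif_neg h, hφg, Sum.elim_inl]
  have hright : Function.RightInverse φg φf := by
    rintro (⟨v, hv⟩ | ⟨e, k⟩)
    · rw [hφg]
      simp only [Sum.elim_inl]
      rw [hφf]
      simp only [dif_neg hv]
    · rw [hφg]
      simp only [Sum.elim_inr]
      set u : ↥(Tipsf e) := (eqv e).symm k with hu
      obtain ⟨-, hutip, huedge⟩ := Finset.mem_filter.mp u.2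
      rw [hφf]
      simp only [dif_pos hutip]
      have hEe : E u.1 hutip = e := by
        apply Subtype.ext
        apply Sym2.map.injective Subtype.val_injective
        show Sym2.map Subtype.val (E u.1 hutip).1 = Sym2.map Subtype.val e.1
        rw [← huedge, hE]
        simp [Sym2.map_pair_eq]
      have key : ∀ (e' : T.edgeSet) (hm : (u : V) ∈ Tipsf e') (_ : e' = e),
          (⟨e', eqv e' ⟨(u : V), hm⟩⟩ : Σ e'' : T.edgeSet, Fin (w e'')) = ⟨e, k⟩ := by
        rintro e' hm rfl
        have h2 : (⟨(u : V), hm⟩ : ↥(Tipsf e')) = u := Subtype.ext rfl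
        rw [h2, hu, Equiv.apply_symm_apply]
      exact congrArg Sum.inr (key _ (hv_in_Tips u.1 hutip) hEe)
  set φ : V ≃ (↥K ⊕ Σ e : T.edgeSet, Fin (w e)) := ⟨φf, φg, hleft, hright⟩ with hφ
  -- adjacency correspondence
  have hadjiff : ∀ a b : V, (BFGraph T w).Adj (φf a) (φf b) ↔ G.Adj a b := by
    intro a b
    by_cases ha : tip a <;> by_cases hb : tip b
    · -- both tips: both sides false
      rw [hφf]
      simp only [dif_pos ha, dif_pos hb]
      constructor
      · intro h; exact absurd h BF_not_adj_inr_inr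
      · intro h; exact absurd (htips_not_adj a b ha hb h) (fun f => f)
    · -- a tip, b not
      rw [hφf]
      simp only [dif_pos ha, dif_neg hb]
      rw [adj_comm, BF_adj_inr]
      constructor
      · rintro ⟨c, hc, hmem⟩
        rw [Sum.inl.injEq] at hc
        subst hc
        rw [hE] at hmem
        simp only [Sym2.mem_iff] at hmem
        have : b = n1 a ∨ b = n2 a := by
          rcases hmem with h1 | h1
          · exact Or.inl (congrArg Subtype.val h1)
          · exact Or.inr (congrArg Subtype.val h1)
        have hbN : b ∈ G.neighborSet a := by
          rw [(hn12 a ha).2]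
          rcases this with rfl | rfl <;> simp
        exact hbN
      · intro h
        refine ⟨⟨b, hmemK b hb⟩, rfl, ?_⟩
        have hbN : b ∈ G.neighborSet a := h
        rw [(hn12 a ha).2] at hbN
        rw [hE]
        simp only [Sym2.mem_iff]
        rcases hbN with rfl | rfl
        · exact Or.inl rfl
        · exact Or.inr rfl
    · -- b tip, a not
      rw [hφf]
      simp only [dif_pos hb, dif_neg ha]
      rw [BF_adj_inr]
      constructor
      · rintro ⟨c, hc, hmem⟩
        rw [Sum.inl.injEq] at hc
        subst hc
        rw [hE] at hmem
        simp only [Sym2.mem_iff] at hmem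
        have : a = n1 b ∨ a = n2 b := by
          rcases hmem with h1 | h1
          · exact Or.inl (congrArg Subtype.val h1)
          · exact Or.inr (congrArg Subtype.val h1)
        have haN : a ∈ G.neighborSet b := by
          rw [(hn12 b hb).2]
          rcases this with rfl | rfl <;> simp
        exact ((mem_neighborSet G b a).mp haN).symm
      · intro h
        refine ⟨⟨a, hmemK a ha⟩, rfl, ?_⟩
        have haN : a ∈ G.neighborSet b := h.symm
        rw [(hn12 b hb).2] at haN
        rw [hE]
        simp only [Sym2.mem_iff]
        rcases haN with rfl | rfl
        · exact Or.inl rfl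
        · exact Or.inr rfl
    · -- neither tip
      rw [hφf]
      simp only [dif_neg ha, dif_neg hb]
      rw [BF_adj_inl_inl, hTadj]
  -- K is nonempty
  have hKne : Nonempty ↥K := by
    by_contra h
    have hall : ∀ v : V, tip v := by
      intro v
      by_contra hv
      exact h ⟨⟨v, hmemK v hv⟩⟩
    obtain ⟨v⟩ := hconn.nonempty
    exact hn1nt v (hall v) (hall (n1 v))
  -- T is connected
  have hTpre : ∀ (n : ℕ) (u v : V) (p : G.Walk u v) (hu : ¬ tip u) (hv : ¬ tip v),
      p.length ≤ n → T.Reachable ⟨u, hmemK u hu⟩ ⟨v, hmemK v hv⟩ := by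
    intro n
    induction n with
    | zero =>
      intro u v p hu hv hlen
      have huv : u = v := p.eq_of_length_eq_zero (by omega)
      subst huv
      exact Reachable.refl _
    | succ n ih =>
      intro u v p hu hv hlen
      cases p with
      | nil => exact Reachable.refl _
      | @cons _ b _ h q =>
        by_cases hb : tip b
        · have hbN := (hn12 b hb).2
          have huN : u ∈ G.neighborSet b := h.symm
          cases q with
          | nil => exact absurd hb hv
          | @cons _ c _ h2 r =>
            have hcN : c ∈ G.neighborSet b := h2
            rw [hbN] at huN hcN
            have hcnt : ¬ tip c := by
              rcases hcN with rfl | rfl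
              exacts [hn1nt b hb, hn2nt b hb]
            have hreach : T.Reachable ⟨c, hmemK c hcnt⟩ ⟨v, hmemK v hv⟩ :=
              ih c v r hcnt hv (by
                simp only [Walk.length_cons] at hlen
                omega)
            rcases eq_or_ne u c with rfl | hne
            · exact hreach
            · have hadj_uc : G.Adj u c := by
                rcases huN with rfl | rfl <;> rcases hcN with rfl | rfl
                · exact absurd rfl hne
                · exact (hn12 b hb).1
                · exact (hn12 b hb).1.symm
                · exact absurd rfl hne
              have : T.Adj ⟨u, hmemK u hu⟩ ⟨c, hmemK c hcnt⟩ := (hTadj _ _).mpr hadj_uc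
              exact this.reachable.trans hreach
        · have hTub : T.Adj ⟨u, hmemK u hu⟩ ⟨b, hmemK b hb⟩ := (hTadj _ _).mpr h
          exact hTub.reachable.trans (ih b v q hb hv (by
            simp only [Walk.length_cons] at hlen
            omega))
  have hTconn : T.Connected := by
    rw [connected_iff]
    refine ⟨?_, hKne⟩
    rintro ⟨u, hu⟩ ⟨v, hv⟩
    obtain ⟨p⟩ := hconn.preconnected u v
    exact hTpre p.length u v p hu hv le_rfl
  -- T is acyclic
  have hTac : T.IsAcyclic := by
    apply acyclic_of_chordal_trianglefree
    · intro n hn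
      constructor
      intro f
      exact (hchord n hn).false ((Embedding.induce K).comp f)
    · rintro ⟨x, hx⟩ ⟨y, hy⟩ ⟨z, hz⟩ hxy hyz hxz
      rw [hTadj] at hxy hyz hxz
      rcases htri_tip x y z hxy hyz hxz with h | h | h
      exacts [hx h, hy h, hz h]
  exact ⟨↥K, inferInstance, T, ⟨hTconn, hTac⟩, w, ⟨⟨φ, fun {a b} => hadjiff a b⟩⟩⟩

end Helpers

/-- **Proposition 4.7.** A finite connected simple graph `G` is isomorphic to `BF(T,w)`
for some finite tree `T` and edge-weight `w : E(T) → ℕ` iff `G` is chordal and every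
triangle of `G` has a vertex of degree 2. -/
theorem isoBF_iff_chordal_triangle_degree_two {V : Type} [Fintype V] (G : SimpleGraph V)
    (hconn : G.Connected) :
    (∃ (VT : Type) (_ : Fintype VT) (T : SimpleGraph VT) (_ : T.IsTree)
        (w : T.edgeSet → ℕ), Nonempty (G ≃g BFGraph T w)) ↔
      (Chordal G ∧ ∀ x y z : V, G.Adj x y → G.Adj y z → G.Adj x z →
        (G.neighborSet x).ncard = 2 ∨ (G.neighborSet y).ncard = 2 ∨
          (G.neighborSet z).ncard = 2) := by
  constructor
  · rintro ⟨VT, instFT, T, hT, w, ⟨φ⟩⟩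
    exact ⟨(forward_aux hT φ).1, (forward_aux hT φ).2⟩
  · rintro ⟨hchord, htri⟩
    exact backward_aux G hconn hchord htri


end ChauHaMaithani
end
end
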